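/- arXiv:1609.02717 — 3 statements merged into one kernel-verified Lean document; each statement's English description precedes it below -/
import Mathlib

section
/- Let k ≥ 1 and let P₀,…,P_k ∈ ℂ[X₀,…,X_k] be homogeneous polynomials, all of the same degree d ≥ 1, whose only common zero in ℂ^{k+1} is the origin. Then the Jacobian determinant J = det((∂P_i/∂X_j)_{0≤i,j≤k}) is not the zero polynomial. -/
open MvPolynomial


theorem pderiv_aeval_eq {n : ℕ} {τ : Type} [Fintype τ]
    (f : τ → MvPolynomial (Fin n) ℂ) (j : Fin n) (H : MvPolynomial τ ℂ) :
    pderiv j (aeval f H) =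
      ∑ v, aeval f (pderiv v H) * pderiv j (f v) := by
  classical
  induction H using MvPolynomial.induction_on with
  | C a => simp
  | add p q hp hq =>
      simp only [map_add, hp, hq, add_mul, ← Finset.sum_add_distrib]
  | mul_X p v hp =>
      simp only [map_mul, aeval_X, pderiv_mul, hp, pderiv_X, map_add, map_mul,
        Pi.single_apply, Finset.sum_add_distrib, add_mul, Finset.sum_mul,
        apply_ite (aeval f), map_one, map_zero, mul_ite, ite_mul, one_mul, zero_mul,
        mul_zero, Finset.sum_ite_eq, Finset.mem_univ, if_true]
      refine congrArg₂ (· + ·) ?_ ?_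
      exact Finset.sum_congr rfl fun w _ => by ring
      ring

/-- Picking out a homogeneous component of a product with a homogeneous polynomial. -/
theorem homogeneousComponent_mul_right {n : ℕ} {p q : MvPolynomial (Fin n) ℂ} {d N : ℕ}
    (hp : p.IsHomogeneous d) (hdN : d ≤ N) :
    homogeneousComponent N (q * p) = homogeneousComponent (N - d) q * p := by
  classical
  conv_lhs => rw [← MvPolynomial.sum_homogeneousComponent q]
  rw [Finset.sum_mul, map_sum]
  have h1 : ∀ m ∈ Finset.range (q.totalDegree + 1),
      homogeneousComponent N (homogeneousComponent m q * p)
        = if m = N - d then homogeneousComponent (N - d) q * p else 0 := by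
    intro m _
    have hmem : homogeneousComponent m q * p ∈ homogeneousSubmodule (Fin n) ℂ (m + d) :=
      (mem_homogeneousSubmodule _ _).2 ((homogeneousComponent_isHomogeneous m q).mul hp)
    rw [homogeneousComponent_of_mem hmem]
    by_cases hm : m = N - d
    · subst hm
      have : N = N - d + d := by omega
      simp [← this]
    · have : ¬ (N = m + d) := by omega
      simp [this, hm]
  rw [Finset.sum_congr rfl h1, Finset.sum_ite_eq' (Finset.range (q.totalDegree + 1)) (N - d)]
  split
  · rfl
  · next h =>
    have : homogeneousComponent (N - d) q = 0 := by
      apply homogeneousComponent_eq_zero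
      simp only [Finset.mem_range, not_lt] at h
      omega
    rw [this, zero_mul]

theorem finite_over_range {n d N : ℕ} (hd : 1 ≤ d) (hdN : d ≤ N)
    (P : Fin n → MvPolynomial (Fin n) ℂ)
    (hhom : ∀ i, (P i).IsHomogeneous d)
    (hpow : ∀ i, (X i : MvPolynomial (Fin n) ℂ) ^ N ∈ Ideal.span (Set.range P)) :
    Module.Finite ↥((aeval P : MvPolynomial (Fin n) ℂ →ₐ[ℂ] MvPolynomial (Fin n) ℂ).range)
      (MvPolynomial (Fin n) ℂ) := by
  classical
  set A₀ := (aeval P : MvPolynomial (Fin n) ℂ →ₐ[ℂ] MvPolynomial (Fin n) ℂ).range with hA₀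
  -- homogeneous representation of X i ^ N
  have rep : ∀ i, ∃ c : Fin n → MvPolynomial (Fin n) ℂ,
      (∀ l, (c l).totalDegree ≤ N - d) ∧ (∑ l, c l * P l) = X i ^ N := by
    intro i
    obtain ⟨c₀, hc₀⟩ := (Ideal.mem_span_range_iff_exists_fun).1 (hpow i)
    refine ⟨fun l => homogeneousComponent (N - d) (c₀ l), fun l =>
      (homogeneousComponent_isHomogeneous _ _).totalDegree_le, ?_⟩
    have hXN : ((X i : MvPolynomial (Fin n) ℂ) ^ N).IsHomogeneous N := by
      simpa using (isHomogeneous_X ℂ i).pow N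
    have := congrArg (homogeneousComponent N) hc₀
    rw [map_sum] at this
    have h2 : homogeneousComponent N ((X i : MvPolynomial (Fin n) ℂ) ^ N) = X i ^ N := by
      rw [homogeneousComponent_of_mem ((mem_homogeneousSubmodule _ _).2 hXN)]
      simp
    rw [← h2, ← this]
    refine Finset.sum_congr rfl fun l _ => ?_
    exact (homogeneousComponent_mul_right (hhom l) hdN).symm
  set B := n * (N - 1) with hB
  set M₀ : Fin n →₀ ℕ := Finsupp.equivFunOnFinite.symm (fun _ => B) with hM₀
  set gens : Finset (MvPolynomial (Fin n) ℂ) :=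
    (Finset.Iic M₀).image (fun m => monomial m 1) with hgens
  -- membership facts in A₀
  have hCmem : ∀ c : ℂ, (C c : MvPolynomial (Fin n) ℂ) ∈ A₀ := fun c => ⟨C c, by simp⟩
  have hPmem : ∀ l, P l ∈ A₀ := fun l => ⟨X l, by simp⟩
  have hsmul : ∀ (a : MvPolynomial (Fin n) ℂ) (ha : a ∈ A₀) (q : MvPolynomial (Fin n) ℂ),
      (⟨a, ha⟩ : A₀) • q = a * q := fun a ha q => rfl
  -- main induction
  have key : ∀ D : ℕ, ∀ q : MvPolynomial (Fin n) ℂ, q.totalDegree ≤ D →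
      q ∈ Submodule.span ↥A₀ (gens : Set (MvPolynomial (Fin n) ℂ)) := by
    intro D
    induction D using Nat.strong_induction_on with
    | _ D ih =>
      intro q hq
      rw [← support_sum_monomial_coeff q]
      refine Submodule.sum_mem _ fun m hm => ?_
      have hdm : (m.sum fun _ e => e) ≤ D := le_trans (le_totalDegree hm) hq
      have hmono : (monomial m (1:ℂ)) ∈ Submodule.span ↥A₀ (gens : Set (MvPolynomial (Fin n) ℂ)) := by
        by_cases hcase : (m.sum fun _ e => e) ≤ B
        · -- small degree: a generator
          refine Submodule.subset_span ?_
          simp only [hgens, Finset.coe_image, Set.mem_image, Finset.mem_coe, Finset.mem_Iic]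
          refine ⟨m, ?_, rfl⟩
          intro i
          have h1 : m i ≤ m.sum fun _ e => e := by
            by_cases hi : i ∈ m.support
            · exact Finset.single_le_sum (fun _ _ => Nat.zero_le _) hi
            · simp [Finsupp.notMem_support_iff.1 hi]
          simpa [hM₀] using le_trans h1 hcase
        · -- large degree: reduce using the relations
          push_neg at hcase
          obtain ⟨i, hNi⟩ : ∃ i, N ≤ m i := by
            by_contra hcon
            push_neg at hcon
            have : (m.sum fun _ e => e) ≤ B := by
              have h1 : (m.sum fun _ e => e) = ∑ i ∈ m.support, m i := rfl
              have h2 : ∑ i ∈ m.support, m i ≤ ∑ _i ∈ m.support, (N-1) :=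
                Finset.sum_le_sum (fun i _ => by have := hcon i; omega)
              have h3 : ∑ _i ∈ m.support, (N-1) = m.support.card * (N-1) := by
                simp [Finset.sum_const, Nat.smul_one_eq_cast]
              have h4 : m.support.card ≤ n := by
                simpa using Finset.card_le_univ m.support
              rw [hB]
              calc (m.sum fun _ e => e) = ∑ i ∈ m.support, m i := h1
                _ ≤ m.support.card * (N-1) := by rw [← h3]; exact h2
                _ ≤ n * (N-1) := Nat.mul_le_mul_right _ h4
            omega
          set m' := m - Finsupp.single i N with hm'
          have hmm' : m' + Finsupp.single i N = m := by
            ext j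
            simp only [Finsupp.add_apply, Finsupp.tsub_apply, Finsupp.single_apply, hm']
            by_cases hij : i = j
            · subst hij; simp; omega
            · simp [hij]
          have hsplit : (monomial m (1:ℂ)) = monomial m' 1 * X i ^ N := by
            rw [X_pow_eq_monomial, monomial_mul, hmm', mul_one]
          obtain ⟨c, hcdeg, hcP⟩ := rep i
          rw [hsplit, ← hcP, Finset.mul_sum]
          refine Submodule.sum_mem _ fun l _ => ?_
          have : monomial m' 1 * (c l * P l) = (⟨P l, hPmem l⟩ : A₀) • (monomial m' 1 * c l) := by
            rw [hsmul]; ring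
          rw [this]
          refine Submodule.smul_mem _ _ ?_
          -- degree bound for the new polynomial
          have hm'deg : (m'.sum fun _ e => e) + N = m.sum fun _ e => e := by
            have := congrArg (fun s => Finsupp.sum s fun _ e => e) hmm'
            simpa [Finsupp.sum_add_index] using this
          have hdeg : (monomial m' (1:ℂ) * c l).totalDegree ≤ (m.sum fun _ e => e) - d := by
            refine le_trans (totalDegree_mul _ _) ?_
            have h5 : (monomial m' (1:ℂ)).totalDegree = m'.sum fun _ e => e :=
              totalDegree_monomial _ one_ne_zero
            rw [h5]
            have := hcdeg l
            omega
          exact ih ((m.sum fun _ e => e) - d) (by omega) _ hdeg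
      -- now include the coefficient
      have : (monomial m (coeff m q)) = (⟨C (coeff m q), hCmem _⟩ : A₀) • monomial m 1 := by
        rw [hsmul, C_mul_monomial, mul_one]
      rw [this]
      exact Submodule.smul_mem _ _ hmono
  refine ⟨⟨gens, ?_⟩⟩
  rw [Submodule.eq_top_iff']
  intro q
  exact key q.totalDegree q le_rfl

theorem key_frac {K : Type} [Field K] [Algebra ℂ K] {n : ℕ} (p : Fin n → K) (x : K)
    (hx : IsIntegral (↥(IntermediateField.adjoin ℂ (Set.range p))) x) :
    ∃ (nd : ℕ) (t : ℕ → MvPolynomial (Fin n) ℂ),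
      (∑ m ∈ Finset.range (nd + 1), aeval p (t m) * x ^ m) = 0 ∧
      (∑ m ∈ Finset.range (nd + 1), aeval p (t m) * ((m : K) * x ^ (m - 1))) ≠ 0 := by
  classical
  set F := IntermediateField.adjoin ℂ (Set.range p) with hF
  haveI : CharZero F :=
    charZero_of_injective_algebraMap (algebraMap ℂ F).injective
  set G := minpoly (↥F) x with hG
  have hGdeg : 0 < G.natDegree := minpoly.natDegree_pos hx
  have hG0 : Polynomial.aeval x G = 0 := minpoly.aeval (↥F) x
  have hG'ne : Polynomial.derivative G ≠ 0 := by
    intro h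
    have h1 := congrArg (fun q => Polynomial.coeff q (G.natDegree - 1)) h
    simp only [Polynomial.coeff_derivative, Polynomial.coeff_zero] at h1
    rw [show G.natDegree - 1 + 1 = G.natDegree by omega] at h1
    rw [(minpoly.monic hx).coeff_natDegree, one_mul] at h1
    have h2 : ((G.natDegree - 1 : ℕ) : ↥F) + 1 = ((G.natDegree - 1 + 1 : ℕ) : ↥F) := by
      push_cast; ring
    rw [h2] at h1
    exact Nat.cast_ne_zero.mpr (Nat.succ_ne_zero _) h1
  have hG'x : Polynomial.aeval x (Polynomial.derivative G) ≠ 0 := by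
    intro h
    have hdvd := minpoly.dvd (↥F) x h
    have hle := Polynomial.degree_le_of_dvd hdvd hG'ne
    exact absurd hle (not_le.2 (Polynomial.degree_derivative_lt (minpoly.ne_zero hx)))
  have coeffrep : ∀ m : ℕ, ∃ rrs : MvPolynomial (Fin n) ℂ × MvPolynomial (Fin n) ℂ,
      (aeval p rrs.2 : K) ≠ 0 ∧
      (algebraMap (↥F) K (G.coeff m)) = aeval p rrs.1 / aeval p rrs.2 := by
    intro m
    have hmem : (algebraMap (↥F) K (G.coeff m)) ∈
        IntermediateField.adjoin ℂ (Set.range p) := by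
      exact SetLike.coe_mem (G.coeff m)
    rw [IntermediateField.mem_adjoin_range_iff] at hmem
    obtain ⟨r, s, hrs⟩ := hmem
    by_cases hs : (aeval p s : K) = 0
    · refine ⟨(0, 1), by simp, ?_⟩
      rw [hrs, hs, div_zero]
      simp
    · exact ⟨(r, s), hs, hrs⟩
  choose rs hsne hrs using coeffrep
  set nd := G.natDegree with hnd
  have hSne : (∏ m' ∈ Finset.range (nd + 1), (aeval p (rs m').2 : K)) ≠ 0 :=
    Finset.prod_ne_zero_iff.2 fun m _ => hsne m
  have htm : ∀ m ∈ Finset.range (nd + 1),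
      (aeval p ((rs m).1 * ∏ m' ∈ (Finset.range (nd + 1)).erase m, (rs m').2) : K)
      = algebraMap (↥F) K (G.coeff m)
          * ∏ m' ∈ Finset.range (nd + 1), (aeval p (rs m').2 : K) := by
    intro m hm
    rw [map_mul, map_prod]
    have h1 : algebraMap (↥F) K (G.coeff m) * aeval p (rs m).2 = aeval p (rs m).1 := by
      rw [hrs m, div_mul_cancel₀ _ (hsne m)]
    rw [← h1, mul_assoc]
    congr 1
    exact Finset.mul_prod_erase _ (fun m' => (aeval p (rs m').2 : K)) hm
  refine ⟨nd, fun m => (rs m).1 * ∏ m' ∈ (Finset.range (nd + 1)).erase m, (rs m').2, ?_, ?_⟩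
  · -- first identity
    rw [Finset.sum_congr rfl (fun m hm => by rw [htm m hm])]
    have h2 : ∀ m ∈ Finset.range (nd + 1),
        algebraMap (↥F) K (G.coeff m)
          * (∏ m' ∈ Finset.range (nd + 1), (aeval p (rs m').2 : K)) * x ^ m
        = (∏ m' ∈ Finset.range (nd + 1), (aeval p (rs m').2 : K)) * ((G.coeff m) • x ^ m) := by
      intro m _
      rw [Algebra.smul_def]; ring
    rw [Finset.sum_congr rfl h2, ← Finset.mul_sum, ← Polynomial.aeval_eq_sum_range, hG0,
      mul_zero]
  · -- second identity
    rw [Finset.sum_congr rfl (fun m hm => by rw [htm m hm])]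
    have h2 : ∀ m ∈ Finset.range (nd + 1),
        algebraMap (↥F) K (G.coeff m)
          * (∏ m' ∈ Finset.range (nd + 1), (aeval p (rs m').2 : K)) * ((m : K) * x ^ (m - 1))
        = (∏ m' ∈ Finset.range (nd + 1), (aeval p (rs m').2 : K))
            * (algebraMap (↥F) K (G.coeff m * (m : ↥F)) * x ^ (m - 1)) := by
      intro m _
      rw [map_mul, map_natCast]; ring
    rw [Finset.sum_congr rfl h2, ← Finset.mul_sum]
    have h3 : (∑ m ∈ Finset.range (nd + 1),
        algebraMap (↥F) K (G.coeff m * (m : ↥F)) * x ^ (m - 1))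
        = Polynomial.aeval x (Polynomial.derivative G) := by
      rw [Polynomial.derivative_apply, Polynomial.sum_def, map_sum]
      rw [← Finset.sum_subset (Polynomial.supp_subset_range_natDegree_succ (p := G))]
      · refine Finset.sum_congr rfl fun m _ => ?_
        simp only [map_mul, Polynomial.aeval_C, map_pow, Polynomial.aeval_X]
      · intro m _ hm
        rw [Polynomial.notMem_support_iff.1 hm]
        simp
    rw [h3]
    exact mul_ne_zero hSne hG'x

theorem integral_over_adjoin {n : ℕ} (P : Fin n → MvPolynomial (Fin n) ℂ)
    (hfin : Module.Finite
      ↥((aeval P : MvPolynomial (Fin n) ℂ →ₐ[ℂ] MvPolynomial (Fin n) ℂ).range)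
      (MvPolynomial (Fin n) ℂ)) (i : Fin n) :
    IsIntegral (↥(IntermediateField.adjoin ℂ (Set.range (fun l =>
        algebraMap (MvPolynomial (Fin n) ℂ) (FractionRing (MvPolynomial (Fin n) ℂ)) (P l)))))
      (algebraMap (MvPolynomial (Fin n) ℂ) (FractionRing (MvPolynomial (Fin n) ℂ)) (X i)) := by
  classical
  obtain ⟨Q, hQm, hQ0⟩ := IsIntegral.of_finite
    ↥((aeval P : MvPolynomial (Fin n) ℂ →ₐ[ℂ] MvPolynomial (Fin n) ℂ).range)
    (X i : MvPolynomial (Fin n) ℂ)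
  have hmemF : ∀ a : ↥((aeval P : MvPolynomial (Fin n) ℂ →ₐ[ℂ] MvPolynomial (Fin n) ℂ).range),
      algebraMap (MvPolynomial (Fin n) ℂ) (FractionRing (MvPolynomial (Fin n) ℂ)) (a : MvPolynomial (Fin n) ℂ)
      ∈ IntermediateField.adjoin ℂ (Set.range (fun l =>
          algebraMap (MvPolynomial (Fin n) ℂ) (FractionRing (MvPolynomial (Fin n) ℂ)) (P l))) := by
    intro a
    obtain ⟨r, hr⟩ := (AlgHom.mem_range (φ := (aeval P : MvPolynomial (Fin n) ℂ →ₐ[ℂ] MvPolynomial (Fin n) ℂ))).1 a.2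
    have h2 := MvPolynomial.comp_aeval P
      (IsScalarTower.toAlgHom ℂ (MvPolynomial (Fin n) ℂ) (FractionRing (MvPolynomial (Fin n) ℂ)))
    have h1 : algebraMap (MvPolynomial (Fin n) ℂ) (FractionRing (MvPolynomial (Fin n) ℂ)) (aeval P r)
        = aeval (fun l => algebraMap (MvPolynomial (Fin n) ℂ) (FractionRing (MvPolynomial (Fin n) ℂ)) (P l)) r := by
      calc algebraMap (MvPolynomial (Fin n) ℂ) (FractionRing (MvPolynomial (Fin n) ℂ)) (aeval P r)
          = ((IsScalarTower.toAlgHom ℂ (MvPolynomial (Fin n) ℂ) (FractionRing (MvPolynomial (Fin n) ℂ))).comp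
              (aeval P)) r := rfl
        _ = _ := by rw [h2]; rfl
    rw [← hr, h1]
    refine IntermediateField.algebra_adjoin_le_adjoin ℂ _ ?_
    rw [Algebra.adjoin_range_eq_range_aeval]
    exact ⟨r, rfl⟩
  refine ⟨Q.map (RingHom.codRestrict
      ((algebraMap (MvPolynomial (Fin n) ℂ) (FractionRing (MvPolynomial (Fin n) ℂ))).comp
        (algebraMap _ (MvPolynomial (Fin n) ℂ))) _ hmemF),
    hQm.map _, ?_⟩
  rw [Polynomial.eval₂_map]
  have hcomm : (algebraMap
        (↥(IntermediateField.adjoin ℂ (Set.range (fun l =>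
          algebraMap (MvPolynomial (Fin n) ℂ) (FractionRing (MvPolynomial (Fin n) ℂ)) (P l)))))
        (FractionRing (MvPolynomial (Fin n) ℂ))).comp
      (RingHom.codRestrict
        ((algebraMap (MvPolynomial (Fin n) ℂ) (FractionRing (MvPolynomial (Fin n) ℂ))).comp
          (algebraMap _ (MvPolynomial (Fin n) ℂ))) _ hmemF)
      = (algebraMap (MvPolynomial (Fin n) ℂ) (FractionRing (MvPolynomial (Fin n) ℂ))).comp
        (algebraMap ↥((aeval P : MvPolynomial (Fin n) ℂ →ₐ[ℂ] MvPolynomial (Fin n) ℂ).range)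
          (MvPolynomial (Fin n) ℂ)) := by
    ext a; rfl
  rw [hcomm, ← Polynomial.hom_eval₂, hQ0, map_zero]

theorem exists_H {n : ℕ} (P : Fin n → MvPolynomial (Fin n) ℂ)
    (hfin : Module.Finite
      ↥((aeval P : MvPolynomial (Fin n) ℂ →ₐ[ℂ] MvPolynomial (Fin n) ℂ).range)
      (MvPolynomial (Fin n) ℂ)) (i : Fin n) :
    ∃ H : MvPolynomial (Option (Fin n)) ℂ,
      aeval (fun o => Option.elim o (X i) P) H = 0 ∧
      aeval (fun o => Option.elim o (X i) P) (pderiv none H) ≠ 0 := by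
  classical
  obtain ⟨nd, t, hsum0, hsumne⟩ := key_frac
    (fun l => algebraMap (MvPolynomial (Fin n) ℂ) (FractionRing (MvPolynomial (Fin n) ℂ)) (P l))
    (algebraMap (MvPolynomial (Fin n) ℂ) (FractionRing (MvPolynomial (Fin n) ℂ)) (X i))
    (integral_over_adjoin P hfin i)
  have hcomp : ∀ q : MvPolynomial (Option (Fin n)) ℂ,
      algebraMap (MvPolynomial (Fin n) ℂ) (FractionRing (MvPolynomial (Fin n) ℂ))
        (aeval (fun o => Option.elim o (X i) P) q)
      = aeval (fun o => Option.elim o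
          (algebraMap (MvPolynomial (Fin n) ℂ) (FractionRing (MvPolynomial (Fin n) ℂ)) (X i))
          (fun l => algebraMap (MvPolynomial (Fin n) ℂ) (FractionRing (MvPolynomial (Fin n) ℂ)) (P l))) q := by
    intro q
    have h2 := MvPolynomial.comp_aeval (fun o => Option.elim o (X i) P)
      (IsScalarTower.toAlgHom ℂ (MvPolynomial (Fin n) ℂ) (FractionRing (MvPolynomial (Fin n) ℂ)))
    have h3 : (fun o => (IsScalarTower.toAlgHom ℂ (MvPolynomial (Fin n) ℂ)
          (FractionRing (MvPolynomial (Fin n) ℂ))) ((fun o => Option.elim o (X i) P) o))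
        = (fun o => Option.elim o
            (algebraMap (MvPolynomial (Fin n) ℂ) (FractionRing (MvPolynomial (Fin n) ℂ)) (X i))
            (fun l => algebraMap (MvPolynomial (Fin n) ℂ) (FractionRing (MvPolynomial (Fin n) ℂ)) (P l))) := by
      funext o; cases o <;> rfl
    calc algebraMap (MvPolynomial (Fin n) ℂ) (FractionRing (MvPolynomial (Fin n) ℂ))
          (aeval (fun o => Option.elim o (X i) P) q)
        = ((IsScalarTower.toAlgHom ℂ (MvPolynomial (Fin n) ℂ)
            (FractionRing (MvPolynomial (Fin n) ℂ))).comp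
            (aeval fun o => Option.elim o (X i) P)) q := rfl
      _ = _ := by rw [h2, h3]
  have hgsome : ((fun o => Option.elim o
      (algebraMap (MvPolynomial (Fin n) ℂ) (FractionRing (MvPolynomial (Fin n) ℂ)) (X i))
      (fun l => algebraMap (MvPolynomial (Fin n) ℂ) (FractionRing (MvPolynomial (Fin n) ℂ)) (P l))) ∘ some)
      = (fun l => algebraMap (MvPolynomial (Fin n) ℂ) (FractionRing (MvPolynomial (Fin n) ℂ)) (P l)) := by
    funext l; rfl
  have hevalH : aeval (fun o => Option.elim o
      (algebraMap (MvPolynomial (Fin n) ℂ) (FractionRing (MvPolynomial (Fin n) ℂ)) (X i))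
      (fun l => algebraMap (MvPolynomial (Fin n) ℂ) (FractionRing (MvPolynomial (Fin n) ℂ)) (P l)))
      (∑ m ∈ Finset.range (nd + 1), rename some (t m) * X none ^ m)
      = ∑ m ∈ Finset.range (nd + 1),
          aeval (fun l => algebraMap (MvPolynomial (Fin n) ℂ) (FractionRing (MvPolynomial (Fin n) ℂ)) (P l)) (t m)
          * (algebraMap (MvPolynomial (Fin n) ℂ) (FractionRing (MvPolynomial (Fin n) ℂ)) (X i)) ^ m := by
    rw [map_sum]
    refine Finset.sum_congr rfl fun m hm => ?_
    rw [map_mul, map_pow, aeval_X, aeval_rename, hgsome]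
    rfl
  have hnone : ∀ m : ℕ, pderiv (none : Option (Fin n)) (rename some (t m) * X none ^ m)
      = rename some (t m) * ((m : MvPolynomial (Option (Fin n)) ℂ) * X none ^ (m - 1)) := by
    intro m
    rw [pderiv_mul]
    have h1 : pderiv (none : Option (Fin n)) (rename some (t m)) = 0 := by
      apply pderiv_eq_zero_of_notMem_vars
      intro hmem
      have := vars_rename some (t m) hmem
      simp at this
    rw [h1, zero_mul, zero_add, pderiv_pow, pderiv_X_self, mul_one]
  have hevalD : aeval (fun o => Option.elim o
      (algebraMap (MvPolynomial (Fin n) ℂ) (FractionRing (MvPolynomial (Fin n) ℂ)) (X i))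
      (fun l => algebraMap (MvPolynomial (Fin n) ℂ) (FractionRing (MvPolynomial (Fin n) ℂ)) (P l)))
      (pderiv none (∑ m ∈ Finset.range (nd + 1), rename some (t m) * X none ^ m))
      = ∑ m ∈ Finset.range (nd + 1),
          aeval (fun l => algebraMap (MvPolynomial (Fin n) ℂ) (FractionRing (MvPolynomial (Fin n) ℂ)) (P l)) (t m)
          * ((m : FractionRing (MvPolynomial (Fin n) ℂ))
             * (algebraMap (MvPolynomial (Fin n) ℂ) (FractionRing (MvPolynomial (Fin n) ℂ)) (X i)) ^ (m - 1)) := by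
    rw [map_sum, Finset.sum_congr rfl (fun m (_ : m ∈ Finset.range (nd+1)) => hnone m), map_sum]
    refine Finset.sum_congr rfl fun m hm => ?_
    rw [map_mul, aeval_rename, hgsome, map_mul, map_natCast, map_pow, aeval_X]
    rfl
  refine ⟨∑ m ∈ Finset.range (nd + 1), rename some (t m) * X none ^ m, ?_, ?_⟩
  · have h4 := hcomp (∑ m ∈ Finset.range (nd + 1), rename some (t m) * X none ^ m)
    rw [hevalH, hsum0] at h4
    exact IsFractionRing.injective (MvPolynomial (Fin n) ℂ) (FractionRing (MvPolynomial (Fin n) ℂ))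
      (by rw [h4, map_zero])
  · intro h0
    have h4 := hcomp (pderiv none (∑ m ∈ Finset.range (nd + 1), rename some (t m) * X none ^ m))
    rw [h0, map_zero, hevalD] at h4
    exact hsumne h4.symm



/-- The Jacobian determinant of a family of `k+1` polynomials in `k+1` variables. -/
noncomputable def jacDet (k : ℕ) (P : Fin (k + 1) → MvPolynomial (Fin (k + 1)) ℂ) :
    MvPolynomial (Fin (k + 1)) ℂ :=
  (Matrix.of fun i j : Fin (k + 1) => MvPolynomial.pderiv j (P i)).det

/-- If `P₀, …, P_k` are homogeneous of common degree `d ≥ 1` with only common zero the origin,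
then their Jacobian determinant is not the zero polynomial. -/
theorem jacobian_ne_zero (k d : ℕ) (hk : 1 ≤ k) (hd : 1 ≤ d)
    (P : Fin (k + 1) → MvPolynomial (Fin (k + 1)) ℂ)
    (hhom : ∀ i, (P i).IsHomogeneous d)
    (hzero : ∀ z : Fin (k + 1) → ℂ, (∀ i, MvPolynomial.eval z (P i) = 0) → z = 0) :
    jacDet k P ≠ 0 := by
  classical
  -- Step 1: Nullstellensatz gives a power of each variable in the ideal of the `P i`
  have hrad : ∀ i : Fin (k+1), ∃ N : ℕ,
      (X i : MvPolynomial (Fin (k+1)) ℂ) ^ N ∈ Ideal.span (Set.range P) := by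
    intro i
    have h1 : (X i : MvPolynomial (Fin (k+1)) ℂ) ∈ (Ideal.span (Set.range P)).radical := by
      rw [← vanishingIdeal_zeroLocus_eq_radical (K := ℂ)]
      intro z hz
      have hz0 : z = 0 := by
        apply hzero
        intro l
        exact (mem_zeroLocus_iff.1 hz) (P l) (Ideal.subset_span (Set.mem_range_self l))
      simp [hz0]
    exact h1
  choose Nf hNf using hrad
  set N : ℕ := d + Finset.univ.sup Nf with hN
  have hdN : d ≤ N := Nat.le_add_right _ _
  have hpowN : ∀ i : Fin (k+1),
      (X i : MvPolynomial (Fin (k+1)) ℂ) ^ N ∈ Ideal.span (Set.range P) := by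
    intro i
    have hle : Nf i ≤ N := le_trans (Finset.le_sup (Finset.mem_univ i)) (Nat.le_add_left _ _)
    have h2 := Ideal.mul_mem_right ((X i : MvPolynomial (Fin (k+1)) ℂ) ^ (N - Nf i)) _ (hNf i)
    rwa [← pow_add, Nat.add_sub_cancel' hle] at h2
  -- Step 2: module-finiteness and the annihilating polynomials
  have hfin := finite_over_range hd hdN P hhom hpowN
  have hHex := fun i => exists_H P hfin i
  choose H hH0 hHne using hHex
  -- Step 3: chain rule and the matrix identity
  set E : Fin (k+1) → MvPolynomial (Fin (k+1)) ℂ :=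
    fun i => aeval (fun o => Option.elim o (X i) P) (pderiv none (H i)) with hE
  set M : Matrix (Fin (k+1)) (Fin (k+1)) (MvPolynomial (Fin (k+1)) ℂ) :=
    Matrix.of fun i l => aeval (fun o => Option.elim o (X i) P) (pderiv (some l) (H i)) with hM
  set A : Matrix (Fin (k+1)) (Fin (k+1)) (MvPolynomial (Fin (k+1)) ℂ) :=
    Matrix.of fun i j => pderiv j (P i) with hA
  have hchain : ∀ i j : Fin (k+1),
      E i * (if i = j then 1 else 0) + ∑ l, M i l * A l j = 0 := by
    intro i j
    have h1 := pderiv_aeval_eq (fun o => Option.elim o (X i) P) j (H i)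
    rw [hH0 i, map_zero] at h1
    rw [Fintype.sum_option] at h1
    have h2 : pderiv j ((fun o => Option.elim o (X i) P) none) = (if i = j then 1 else 0) := by
      show pderiv j (X i) = _
      rw [pderiv_X, Pi.single_apply]
    rw [h2] at h1
    exact h1.symm
  have hMA : M * A = Matrix.diagonal (fun i => -(E i)) := by
    refine Matrix.ext fun i j => ?_
    rw [Matrix.mul_apply, Matrix.diagonal_apply]
    have h3 := hchain i j
    by_cases hij : i = j
    · simp only [hij, if_true] at h3 ⊢
      linear_combination h3
    · simp only [hij, if_false] at h3 ⊢
      linear_combination h3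
  intro hJ
  have hdet := congrArg Matrix.det hMA
  rw [Matrix.det_mul, Matrix.det_diagonal] at hdet
  have hdetA : A.det = 0 := hJ
  rw [hdetA, mul_zero] at hdet
  have hprod : (∏ i, -(E i)) ≠ 0 :=
    Finset.prod_ne_zero_iff.2 fun i _ => neg_ne_zero.2 (hHne i)
  exact hprod hdet.symm
end

section
/- Let k ≥ 2, let B ⊆ ℂᵏ be an open ball centered at the origin, and let f = (f₁,…,f_k) : B → ℂᵏ be holomorphic such that f_k(z) = 0 for every z ∈ B with z_k = 0. Assume that det Df(z) = 0 for every z ∈ B with z_k = 0, and that the restricted Jacobian μ(z) = det((∂f_i/∂z_j(z))_{1≤i,j≤k−1}) is not identically zero on {z ∈ B : z_k = 0}. Then ∂f_k/∂z_k(z) = 0 for every z ∈ B with z_k = 0. -/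
open Metric Complex Set Filter Topology
open scoped Real
set_option maxHeartbeats 1000000

lemma fderiv_line_differentiableOn
    {X F : Type*} [NormedAddCommGroup X] [NormedSpace ℂ X] [ProperSpace X]
    [NormedAddCommGroup F] [NormedSpace ℂ F] [CompleteSpace F]
    {U : Set X} (hU : IsOpen U) {f : X → F} (hf : DifferentiableOn ℂ f U) (c u v : X) :
    DifferentiableOn ℂ (fun t : ℂ => fderiv ℂ f (c + t • u) v) {t : ℂ | c + t • u ∈ U} := by
  haveI : NeBot (𝓝[≠] (0:ℂ)) := NormedField.nhdsNE_neBot 0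
  set L : ℂ → X := fun t => c + t • u with hL
  have hLcont : Continuous L := by fun_prop
  have hT : IsOpen {t : ℂ | L t ∈ U} := hU.preimage hLcont
  intro t₀ ht₀
  apply DifferentiableAt.differentiableWithinAt
  obtain ⟨ε, hε, hball⟩ : ∃ ε > 0, closedBall (L t₀) ε ⊆ U := by
    rcases Metric.isOpen_iff.1 hU (L t₀) ht₀ with ⟨r, hr, hrU⟩
    exact ⟨r/2, by positivity, (closedBall_subset_ball (by linarith)).trans hrU⟩
  set δ : ℝ := ε / (2 * (‖u‖ + 1)) with hδdef
  set ρ : ℝ := ε / (2 * (‖v‖ + 1)) with hρdef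
  have hδ : 0 < δ := by positivity
  have hρ : 0 < ρ := by positivity
  -- membership
  have hmem : ∀ t ∈ ball t₀ δ, ∀ s : ℂ, ‖s‖ ≤ ρ → L t + s • v ∈ closedBall (L t₀) ε := by
    intro t ht s hs
    have h1 : ‖t - t₀‖ < δ := by simpa [mem_ball, dist_eq_norm] using ht
    have : L t + s • v - L t₀ = (t - t₀) • u + s • v := by
      simp only [hL]; module
    rw [mem_closedBall, dist_eq_norm, this]
    have h2 : ‖(t - t₀) • u + s • v‖ ≤ ‖t - t₀‖ * ‖u‖ + ‖s‖ * ‖v‖ := by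
      refine (norm_add_le _ _).trans ?_
      simp [norm_smul]
    have hu1 : ‖t - t₀‖ * ‖u‖ ≤ δ * ‖u‖ := by
      exact mul_le_mul_of_nonneg_right h1.le (norm_nonneg u)
    have hv1 : ‖s‖ * ‖v‖ ≤ ρ * ‖v‖ := mul_le_mul_of_nonneg_right hs (norm_nonneg v)
    have hδu : δ * ‖u‖ ≤ ε / 2 := by
      rw [hδdef, div_mul_eq_mul_div, div_le_div_iff₀ (by positivity) (by norm_num)]
      nlinarith [norm_nonneg u, hε.le]
    have hρv : ρ * ‖v‖ ≤ ε / 2 := by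
      rw [hρdef, div_mul_eq_mul_div, div_le_div_iff₀ (by positivity) (by norm_num)]
      nlinarith [norm_nonneg v, hε.le]
    linarith
  have hmemU : ∀ t ∈ ball t₀ δ, ∀ s : ℂ, ‖s‖ ≤ ρ → L t + s • v ∈ U :=
    fun t ht s hs => hball (hmem t ht s hs)
  have hLtU : ∀ t ∈ ball t₀ δ, L t ∈ U := by
    intro t ht
    simpa using hmemU t ht 0 (by simp [hρ.le])
  -- bound for f
  obtain ⟨M, hM⟩ : ∃ M, ∀ x ∈ closedBall (L t₀) ε, ‖f x‖ ≤ M := by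
    rcases (isCompact_closedBall (L t₀) ε).exists_bound_of_continuousOn
      ((hf.continuousOn).mono hball) with ⟨M, hM⟩
    exact ⟨M, hM⟩
  have hM0 : 0 ≤ M :=
    le_trans (norm_nonneg _) (hM (L t₀) (mem_closedBall_self hε.le))
  -- the one-variable slices
  set φ : ℂ → ℂ → F := fun t ζ => f (L t + ζ • v) with hφ
  have hφd : ∀ t ∈ ball t₀ δ, DifferentiableOn ℂ (φ t) (closedBall 0 ρ) := by
    intro t ht
    refine hf.comp ?_ ?_
    · exact ((differentiable_id.smul_const v).const_add (L t)).differentiableOn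
    · intro ζ hζ
      exact hmemU t ht ζ (by simpa [mem_closedBall, dist_eq_norm] using hζ)
  have hφc : ∀ t ∈ ball t₀ δ, DiffContOnCl ℂ (φ t) (ball 0 ρ) := by
    intro t ht
    exact DifferentiableOn.diffContOnCl (by rw [closure_ball 0 hρ.ne']; exact hφd t ht)
  have hφcont : ∀ t ∈ ball t₀ δ, ContinuousOn (φ t) (sphere 0 ρ) :=
    fun t ht => ((hφd t ht).continuousOn).mono sphere_subset_closedBall
  have hφnorm : ∀ t ∈ ball t₀ δ, ∀ ζ ∈ sphere (0:ℂ) ρ, ‖φ t ζ‖ ≤ M := by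
    intro t ht ζ hζ
    exact hM _ (hmem t ht ζ (by simp [mem_sphere_iff_norm] at hζ; simp [hζ]))
  -- Cauchy formula
  have hsph : ∀ ζ : ℂ, ζ ∈ sphere (0:ℂ) ρ → ‖ζ‖ = ρ := by
    intro ζ hζ; simpa [mem_sphere_iff_norm] using hζ
  have cauchy : ∀ t ∈ ball t₀ δ, ∀ s ∈ ball (0:ℂ) ρ,
      (∮ ζ in C(0, ρ), (ζ - s)⁻¹ • φ t ζ) = (2 * π * I : ℂ) • φ t s :=
    fun t ht s hs => (hφc t ht).circleIntegral_sub_inv_smul hs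
  set D : ℂ → F := fun t => (2 * π * I : ℂ)⁻¹ • ∮ ζ in C(0, ρ), (ζ ^ 2)⁻¹ • φ t ζ with hD
  set q : ℂ → ℂ → F := fun s t => s⁻¹ • (φ t s - φ t 0) with hq
  -- integrability of kernels
  have hker : ∀ t ∈ ball t₀ δ, ∀ s ∈ ball (0:ℂ) ρ,
      ContinuousOn (fun ζ : ℂ => (ζ - s)⁻¹ • φ t ζ) (sphere 0 ρ) := by
    intro t ht s hs
    refine ContinuousOn.smul (ContinuousOn.inv₀ (by fun_prop) ?_) (hφcont t ht)
    intro ζ hζ h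
    rw [sub_eq_zero] at h
    rw [mem_ball, dist_eq_norm, sub_zero] at hs
    have := hsph ζ hζ
    rw [h] at this
    linarith
  have hker2 : ∀ t ∈ ball t₀ δ,
      ContinuousOn (fun ζ : ℂ => (ζ ^ 2)⁻¹ • φ t ζ) (sphere 0 ρ) := by
    intro t ht
    refine ContinuousOn.smul (ContinuousOn.inv₀ (by fun_prop) ?_) (hφcont t ht)
    intro ζ hζ h
    have := hsph ζ hζ
    have hζ0 : ζ ≠ 0 := by
      intro h0; rw [h0] at this; simp at this; linarith
    exact hζ0 (pow_eq_zero_iff (n := 2) (by norm_num) |>.1 h)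
  -- key estimate
  have key : ∀ t ∈ ball t₀ δ, ∀ s : ℂ, s ≠ 0 → ‖s‖ ≤ ρ / 2 →
      ‖q s t - D t‖ ≤ ‖s‖ * (2 * M / ρ ^ 2) := by
    intro t ht s hs0 hsρ
    have hsmem : s ∈ ball (0:ℂ) ρ := by
      rw [mem_ball, dist_eq_norm, sub_zero]; linarith
    have h0mem : (0:ℂ) ∈ ball (0:ℂ) ρ := by simp [hρ]
    set A : ℂ → F := fun ζ => (ζ - s)⁻¹ • φ t ζ with hA
    set B : ℂ → F := fun ζ => (ζ - 0)⁻¹ • φ t ζ with hB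
    set Cc : ℂ → F := fun ζ => (ζ ^ 2)⁻¹ • φ t ζ with hCc
    have intA : CircleIntegrable A 0 ρ :=
      ContinuousOn.circleIntegrable hρ.le (hker t ht s hsmem)
    have intB : CircleIntegrable B 0 ρ :=
      ContinuousOn.circleIntegrable hρ.le (hker t ht 0 h0mem)
    have intC : CircleIntegrable Cc 0 ρ :=
      ContinuousOn.circleIntegrable hρ.le (hker2 t ht)
    have intsAB : CircleIntegrable (fun ζ => s⁻¹ • (A ζ - B ζ)) 0 ρ := by
      refine ContinuousOn.circleIntegrable hρ.le ?_
      exact (((hker t ht s hsmem).sub (hker t ht 0 h0mem)).const_smul s⁻¹)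
    have eqn : q s t - D t =
        (2 * π * I : ℂ)⁻¹ • ∮ ζ in C(0, ρ), (s⁻¹ • (A ζ - B ζ) - Cc ζ) := by
      have e1 : φ t s = (2 * π * I : ℂ)⁻¹ • ∮ ζ in C(0, ρ), A ζ := by
        rw [hA, cauchy t ht s hsmem, inv_smul_smul₀ two_pi_I_ne_zero]
      have e2 : φ t 0 = (2 * π * I : ℂ)⁻¹ • ∮ ζ in C(0, ρ), B ζ := by
        rw [hB, cauchy t ht 0 h0mem, inv_smul_smul₀ two_pi_I_ne_zero]
      rw [circleIntegral.integral_sub intsAB intC,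
        circleIntegral.integral_smul s⁻¹ _ _ _,
        circleIntegral.integral_sub intA intB]
      rw [hq]
      simp only []
      rw [e1, e2]
      module
    rw [eqn]
    have hbound : ∀ ζ ∈ sphere (0:ℂ) ρ,
        ‖s⁻¹ • (A ζ - B ζ) - Cc ζ‖ ≤ ‖s‖ * (2 / ρ * ((ρ ^ 2)⁻¹ * M)) := by
      intro ζ hζ
      have hnζ : ‖ζ‖ = ρ := hsph ζ hζ
      have hζ0 : ζ ≠ 0 := by
        intro h0; rw [h0] at hnζ; simp at hnζ; linarith
      have hζs : ζ - s ≠ 0 := by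
        intro h0
        have : ‖ζ‖ ≤ ‖s‖ := by
          rw [sub_eq_zero] at h0; rw [h0]
        linarith
      have hcomb : s⁻¹ • (A ζ - B ζ) - Cc ζ =
          (s * ((ζ - s)⁻¹ * (ζ ^ 2)⁻¹)) • φ t ζ := by
        rw [hA, hB, hCc]
        simp only [← sub_smul, smul_smul]
        congr 1
        field_simp
        ring
      rw [hcomb, norm_smul]
      have hζsnorm : ρ / 2 ≤ ‖ζ - s‖ := by
        have := norm_sub_norm_le ζ s
        have h2 := norm_sub_norm_le s ζ
        calc ρ / 2 = ρ - ρ/2 := by ring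
        _ ≤ ‖ζ‖ - ‖s‖ := by rw [hnζ]; linarith
        _ ≤ ‖ζ - s‖ := norm_sub_norm_le ζ s
      have hns : ‖(s * ((ζ - s)⁻¹ * (ζ ^ 2)⁻¹))‖ ≤ ‖s‖ * (2 / ρ * (ρ ^ 2)⁻¹) := by
        rw [norm_mul, norm_mul, norm_inv, norm_inv, norm_pow, hnζ]
        refine mul_le_mul_of_nonneg_left ?_ (norm_nonneg s)
        refine mul_le_mul_of_nonneg_right ?_ (by positivity)
        rw [inv_le_comm₀ (by linarith [hζsnorm]) (by positivity)]
        rw [inv_div]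
        linarith
      calc ‖(s * ((ζ - s)⁻¹ * (ζ ^ 2)⁻¹))‖ * ‖φ t ζ‖
          ≤ (‖s‖ * (2 / ρ * (ρ ^ 2)⁻¹)) * M := by
            refine mul_le_mul hns (hφnorm t ht ζ hζ) (norm_nonneg _) ?_
            positivity
        _ = ‖s‖ * (2 / ρ * ((ρ ^ 2)⁻¹ * M)) := by ring
    have hIb := circleIntegral.norm_integral_le_of_norm_le_const hρ.le hbound
    rw [norm_smul, norm_inv]
    have h2pi : ‖(2 * π * I : ℂ)‖ = 2 * π := by
      simp [norm_mul, Complex.norm_I, Real.pi_nonneg, Complex.norm_real]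
    rw [h2pi]
    calc (2 * π)⁻¹ * ‖∮ ζ in C(0, ρ), (s⁻¹ • (A ζ - B ζ) - Cc ζ)‖
        ≤ (2 * π)⁻¹ * (2 * π * ρ * (‖s‖ * (2 / ρ * ((ρ ^ 2)⁻¹ * M)))) := by
          refine mul_le_mul_of_nonneg_left hIb (by positivity)
      _ = ‖s‖ * (2 * M / ρ ^ 2) := by
          field_simp
  -- pointwise limit of difference quotients
  have hpt : ∀ t ∈ ball t₀ δ,
      Tendsto (fun s : ℂ => q s t) (𝓝[≠] (0:ℂ)) (𝓝 (fderiv ℂ f (L t) v)) := by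
    intro t ht
    have hfd : DifferentiableAt ℂ f (L t) := hf.differentiableAt (hU.mem_nhds (hLtU t ht))
    have hcurve : HasDerivAt (fun s : ℂ => L t + s • v) v 0 := by
      simpa using ((hasDerivAt_id (0:ℂ)).smul_const v).const_add (L t)
    have hl : HasFDerivAt f (fderiv ℂ f (L t)) ((fun s : ℂ => L t + s • v) 0) := by
      simpa using hfd.hasFDerivAt
    have hcomp := hl.comp_hasDerivAt 0 hcurve
    have htend := hasDerivAt_iff_tendsto_slope.1 hcomp
    rw [show (0:ℂ) = ((0:ℂ):ℂ) from rfl] at htend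
    refine htend.congr' ?_
    filter_upwards [self_mem_nhdsWithin] with s hs
    rw [slope_def_module]
    simp only [hq, hφ, Function.comp_apply, sub_zero]
  -- uniform convergence
  have hunif : TendstoUniformlyOn q D (𝓝[≠] (0:ℂ)) (ball t₀ δ) := by
    rw [Metric.tendstoUniformlyOn_iff]
    intro ε' hε'
    have hr0 : (0:ℝ) < min (ρ/2) (ε' * ρ^2 / (2*M+1)) := by positivity
    have h1 : ∀ᶠ s : ℂ in 𝓝[≠] (0:ℂ), s ≠ 0 := by
      filter_upwards [self_mem_nhdsWithin] with s hs using hs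
    have h2 : ∀ᶠ s : ℂ in 𝓝 (0:ℂ), ‖s‖ < min (ρ/2) (ε' * ρ^2 / (2*M+1)) := by
      filter_upwards [Metric.ball_mem_nhds (0:ℂ) hr0] with s hs
      simpa [mem_ball, dist_eq_norm] using hs
    filter_upwards [h1.and (h2.filter_mono nhdsWithin_le_nhds)] with s hs t ht
    rw [dist_comm, dist_eq_norm]
    have hb := key t ht s hs.1 (le_of_lt (lt_of_lt_of_le hs.2 (min_le_left _ _)))
    refine lt_of_le_of_lt hb ?_
    have h3 : ‖s‖ < ε' * ρ^2 / (2*M+1) := lt_of_lt_of_le hs.2 (min_le_right _ _)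
    have h3' : ‖s‖ * (2*M+1) < ε' * ρ^2 := by
      rw [← lt_div_iff₀ (by positivity)]
      exact h3
    have hρ2 : (0:ℝ) < ρ^2 := by positivity
    rw [show ‖s‖ * (2 * M / ρ^2) = ‖s‖ * (2*M) / ρ^2 by ring, div_lt_iff₀ hρ2]
    nlinarith [norm_nonneg s]
  -- each difference quotient is holomorphic in t
  have hqdiff : ∀ᶠ s : ℂ in 𝓝[≠] (0:ℂ), DifferentiableOn ℂ (q s) (ball t₀ δ) := by
    have h2 : ∀ᶠ s : ℂ in 𝓝 (0:ℂ), ‖s‖ ≤ ρ := by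
      filter_upwards [Metric.closedBall_mem_nhds (0:ℂ) hρ] with s hs
      simpa [mem_closedBall, dist_eq_norm] using hs
    filter_upwards [h2.filter_mono nhdsWithin_le_nhds] with s hs
    refine DifferentiableOn.const_smul (DifferentiableOn.sub ?_ ?_) s⁻¹
    · refine hf.comp ?_ ?_
      · exact (((differentiable_id.smul_const u).const_add c).add_const (s • v)).differentiableOn
      · intro x hx
        exact hmemU x hx s hs
    · refine hf.comp ?_ ?_
      · exact (((differentiable_id.smul_const u).const_add c).add_const ((0:ℂ) • v)).differentiableOn
      · intro x hx
        exact hmemU x hx 0 (by simp [hρ.le])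
  -- conclude
  have hDdiff : DifferentiableOn ℂ D (ball t₀ δ) :=
    hunif.tendstoLocallyUniformlyOn.differentiableOn hqdiff isOpen_ball
  have hDeq : ∀ t ∈ ball t₀ δ, fderiv ℂ f (L t) v = D t := fun t ht =>
    tendsto_nhds_unique (hpt t ht) (hunif.tendsto_at ht)
  have hfinal : DifferentiableOn ℂ (fun t => fderiv ℂ f (L t) v) (ball t₀ δ) :=
    hDdiff.congr hDeq
  exact hfinal.differentiableAt (isOpen_ball.mem_nhds (mem_ball_self hδ))

lemma slice_partial_zero {n : ℕ} {R : ℝ}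
    {f : EuclideanSpace ℂ (Fin (n + 1)) → EuclideanSpace ℂ (Fin (n + 1))}
    (hf : DifferentiableOn ℂ f (Metric.ball 0 R))
    (hinv : ∀ z ∈ Metric.ball (0 : EuclideanSpace ℂ (Fin (n + 1))) R,
      z (Fin.last n) = 0 → f z (Fin.last n) = 0)
    {z : EuclideanSpace ℂ (Fin (n + 1))} (hz : z ∈ Metric.ball 0 R)
    (hzl : z (Fin.last n) = 0) (j : Fin n) :
    fderiv ℂ f z (EuclideanSpace.single (Fin.castSucc j) 1) (Fin.last n) = 0 := by
  set w : EuclideanSpace ℂ (Fin (n + 1)) := EuclideanSpace.single (Fin.castSucc j) 1 with hw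
  have hwlast : w (Fin.last n) = 0 := by
    rw [hw, EuclideanSpace.single_apply]
    simp [(Fin.castSucc_lt_last j).ne']
  have hwnorm : ‖w‖ = 1 := by simp [hw, EuclideanSpace.norm_single]
  have hzR : ‖z‖ < R := by simpa [mem_ball_zero_iff] using hz
  have hr0 : (0:ℝ) < R - ‖z‖ := by linarith
  have hmem : ∀ t : ℂ, ‖t‖ < R - ‖z‖ →
      z + t • w ∈ Metric.ball (0 : EuclideanSpace ℂ (Fin (n + 1))) R := by
    intro t ht
    rw [mem_ball_zero_iff]
    calc ‖z + t • w‖ ≤ ‖z‖ + ‖t • w‖ := norm_add_le _ _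
      _ = ‖z‖ + ‖t‖ := by rw [norm_smul, hwnorm, mul_one]
      _ < R := by linarith
  have hlast : ∀ t : ℂ, (z + t • w) (Fin.last n) = 0 := by
    intro t
    have h : (z + t • w) (Fin.last n) = z (Fin.last n) + t * w (Fin.last n) := rfl
    rw [h, hzl, hwlast]; ring
  have hev : (fun t : ℂ => f (z + t • w) (Fin.last n)) =ᶠ[𝓝 0] (fun _ => (0:ℂ)) := by
    filter_upwards [Metric.ball_mem_nhds (0:ℂ) hr0] with t ht
    exact hinv _ (hmem t (by simpa [mem_ball, dist_eq_norm] using ht)) (hlast t)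
  have hfd : DifferentiableAt ℂ f z := hf.differentiableAt (Metric.isOpen_ball.mem_nhds hz)
  have hcurve : HasDerivAt (fun t : ℂ => z + t • w) w 0 := by
    simpa using ((hasDerivAt_id (0:ℂ)).smul_const w).const_add z
  have hl : HasFDerivAt f (fderiv ℂ f z) ((fun t : ℂ => z + t • w) 0) := by
    simpa using hfd.hasFDerivAt
  have hcomp := hl.comp_hasDerivAt 0 hcurve
  have hproj := (EuclideanSpace.proj (𝕜 := ℂ) (Fin.last n)).hasFDerivAt.comp_hasDerivAt 0 hcomp
  have hψ : HasDerivAt (fun t : ℂ => f (z + t • w) (Fin.last n))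
      (fderiv ℂ f z w (Fin.last n)) 0 := by
    exact hproj
  have h1 := hψ.deriv
  rw [← h1, hev.deriv_eq]
  simp

lemma det_factor_last {n : ℕ} (M : Matrix (Fin (n + 1)) (Fin (n + 1)) ℂ)
    (h : ∀ j : Fin n, M (Fin.last n) (Fin.castSucc j) = 0) :
    M.det = M (Fin.last n) (Fin.last n) * (M.submatrix Fin.castSucc Fin.castSucc).det := by
  rw [Matrix.det_succ_row M (Fin.last n), Fin.sum_univ_castSucc]
  have h1 : ∀ j : Fin n, (-1:ℂ) ^ ((Fin.last n : ℕ) + ((Fin.castSucc j : Fin (n+1)) : ℕ)) *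
      M (Fin.last n) (Fin.castSucc j) *
      (M.submatrix (Fin.last n).succAbove (Fin.castSucc j).succAbove).det = 0 := by
    intro j; rw [h j]; ring
  rw [Finset.sum_congr rfl fun j _ => h1 j, Finset.sum_const_zero, zero_add]
  rw [Fin.succAbove_last, Fin.val_last]
  rw [show (-1:ℂ) ^ (n + n) = 1 from (Even.add_self n).neg_one_pow]
  ring

/-- Let `f` be holomorphic on an open ball `B ⊆ ℂᵏ` (dimension `k = n+1 ≥ 2`) centered at the
origin, with the hyperplane `{z_k = 0}` invariant. If the Jacobian determinant of `f` vanishes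
everywhere on the slice `{z ∈ B : z_k = 0}` but the restricted Jacobian
`μ = det((∂f_i/∂z_j)_{i,j<k})` is not identically zero there, then `∂f_k/∂z_k` vanishes
everywhere on the slice. -/
theorem last_partial_vanishes_on_slice (n : ℕ) (hn : 1 ≤ n) (R : ℝ) (hR : 0 < R)
    (f : EuclideanSpace ℂ (Fin (n + 1)) → EuclideanSpace ℂ (Fin (n + 1)))
    (hf : DifferentiableOn ℂ f (Metric.ball (0 : EuclideanSpace ℂ (Fin (n + 1))) R))
    (hinv : ∀ z ∈ Metric.ball (0 : EuclideanSpace ℂ (Fin (n + 1))) R,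
      z (Fin.last n) = 0 → f z (Fin.last n) = 0)
    (hdet : ∀ z ∈ Metric.ball (0 : EuclideanSpace ℂ (Fin (n + 1))) R,
      z (Fin.last n) = 0 →
        (Matrix.of fun i j : Fin (n + 1) =>
          fderiv ℂ f z (EuclideanSpace.single j 1) i).det = 0)
    (hmu : ∃ z ∈ Metric.ball (0 : EuclideanSpace ℂ (Fin (n + 1))) R,
      z (Fin.last n) = 0 ∧
        (Matrix.of fun i j : Fin n =>
          fderiv ℂ f z (EuclideanSpace.single (Fin.castSucc j) 1) (Fin.castSucc i)).det ≠ 0) :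
    ∀ z ∈ Metric.ball (0 : EuclideanSpace ℂ (Fin (n + 1))) R,
      z (Fin.last n) = 0 →
        fderiv ℂ f z (EuclideanSpace.single (Fin.last n) 1) (Fin.last n) = 0 := by
  classical
  obtain ⟨z₀, hz₀B, hz₀l, hz₀μ⟩ := hmu
  intro z₁ hz₁B hz₁l
  set u : EuclideanSpace ℂ (Fin (n + 1)) := z₁ - z₀ with hu
  set T : Set ℂ := {t : ℂ | z₀ + t • u ∈ Metric.ball (0 : EuclideanSpace ℂ (Fin (n + 1))) R}
    with hTT
  have hBo : IsOpen (Metric.ball (0 : EuclideanSpace ℂ (Fin (n + 1))) R) := Metric.isOpen_ball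
  have hT : IsOpen T := hBo.preimage (by fun_prop)
  have hL0 : z₀ + (0:ℂ) • u = z₀ := by simp
  have hL1 : z₀ + (1:ℂ) • u = z₁ := by simp [hu]
  have h0T : (0:ℂ) ∈ T := by simp only [hTT, Set.mem_setOf_eq, hL0]; exact hz₀B
  have h1T : (1:ℂ) ∈ T := by simp only [hTT, Set.mem_setOf_eq, hL1]; exact hz₁B
  have hulast : u (Fin.last n) = 0 := by
    have h : u (Fin.last n) = z₁ (Fin.last n) - z₀ (Fin.last n) := rfl
    rw [h, hz₁l, hz₀l, sub_zero]
  have hline_last : ∀ t : ℂ, (z₀ + t • u) (Fin.last n) = 0 := by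
    intro t
    have h : (z₀ + t • u) (Fin.last n) = z₀ (Fin.last n) + t * u (Fin.last n) := rfl
    rw [h, hz₀l, hulast]; ring
  have hconv : Convex ℝ T := by
    have h1 : Convex ℝ ((fun x : EuclideanSpace ℂ (Fin (n + 1)) => z₀ + x) ⁻¹'
        Metric.ball (0 : EuclideanSpace ℂ (Fin (n + 1))) R) :=
      (convex_ball (0 : EuclideanSpace ℂ (Fin (n + 1))) R).translate_preimage_right z₀
    have h2 := h1.linear_preimage
      ((LinearMap.toSpanSingleton ℂ (EuclideanSpace ℂ (Fin (n + 1))) u).restrictScalars ℝ)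
    have h3 : T = ((LinearMap.toSpanSingleton ℂ (EuclideanSpace ℂ (Fin (n + 1))) u).restrictScalars ℝ) ⁻¹'
        ((fun x : EuclideanSpace ℂ (Fin (n + 1)) => z₀ + x) ⁻¹'
          Metric.ball (0 : EuclideanSpace ℂ (Fin (n + 1))) R) := by
      ext t
      simp [hTT, LinearMap.toSpanSingleton_apply, mem_ball, dist_eq_norm, sub_neg_eq_add,
        add_comm]
    rw [h3]; exact h2
  set G : ℂ → ℂ := fun t =>
    fderiv ℂ f (z₀ + t • u) (EuclideanSpace.single (Fin.last n) 1) (Fin.last n) with hG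
  set Mu : ℂ → ℂ := fun t => (Matrix.of fun i j : Fin n =>
    fderiv ℂ f (z₀ + t • u) (EuclideanSpace.single (Fin.castSucc j) 1) (Fin.castSucc i)).det
    with hMu
  have hGd : DifferentiableOn ℂ G T := by
    have h := fderiv_line_differentiableOn hBo hf z₀ u
      (EuclideanSpace.single (Fin.last n) 1)
    have h2 := (EuclideanSpace.proj (𝕜 := ℂ) (Fin.last n)).differentiable.comp_differentiableOn h
    exact h2
  have hentry : ∀ (i j : Fin n), DifferentiableOn ℂ (fun t : ℂ =>
      fderiv ℂ f (z₀ + t • u) (EuclideanSpace.single (Fin.castSucc j) 1) (Fin.castSucc i)) T := by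
    intro i j
    have h := fderiv_line_differentiableOn hBo hf z₀ u
      (EuclideanSpace.single (Fin.castSucc j) 1)
    exact (EuclideanSpace.proj (𝕜 := ℂ) (Fin.castSucc i)).differentiable.comp_differentiableOn h
  have hMud : DifferentiableOn ℂ Mu T := by
    have hsum : DifferentiableOn ℂ (fun t => ∑ σ : Equiv.Perm (Fin n),
        ((Equiv.Perm.sign σ : ℤ) : ℂ) * ∏ i : Fin n,
          fderiv ℂ f (z₀ + t • u) (EuclideanSpace.single (Fin.castSucc i) 1)
            (Fin.castSucc (σ i))) T := by
      refine DifferentiableOn.fun_sum fun σ _ => DifferentiableOn.const_mul ?_ _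
      exact DifferentiableOn.fun_finset_prod fun i _ => hentry (σ i) i
    refine hsum.congr fun t ht => ?_
    show (Matrix.of fun i j : Fin n => fderiv ℂ f (z₀ + t • u)
          (EuclideanSpace.single (Fin.castSucc j) 1) (Fin.castSucc i)).det = _
    rw [Matrix.det_apply']
    simp only [Matrix.of_apply]
  have hGMu : ∀ t ∈ T, G t * Mu t = 0 := by
    intro t ht
    have hzB : z₀ + t • u ∈ Metric.ball (0 : EuclideanSpace ℂ (Fin (n + 1))) R := ht
    have hzl : (z₀ + t • u) (Fin.last n) = 0 := hline_last t
    have hrow : ∀ j : Fin n, (Matrix.of fun i j : Fin (n + 1) =>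
        fderiv ℂ f (z₀ + t • u) (EuclideanSpace.single j 1) i) (Fin.last n) (Fin.castSucc j)
        = 0 := by
      intro j
      exact slice_partial_zero hf hinv hzB hzl j
    have hfac := det_factor_last _ hrow
    have hdet0 := hdet _ hzB hzl
    rw [hdet0] at hfac
    have hsub : ((Matrix.of fun i j : Fin (n + 1) =>
        fderiv ℂ f (z₀ + t • u) (EuclideanSpace.single j 1) i).submatrix
          Fin.castSucc Fin.castSucc) = (Matrix.of fun i j : Fin n =>
        fderiv ℂ f (z₀ + t • u) (EuclideanSpace.single (Fin.castSucc j) 1) (Fin.castSucc i)) := by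
      ext i j; rfl
    rw [hsub] at hfac
    exact hfac.symm
  have hMu0 : Mu 0 ≠ 0 := by
    rw [hMu]; simp only [hL0]; exact hz₀μ
  suffices hfin : G 1 = 0 by
    have h2 : fderiv ℂ f (z₀ + (1:ℂ) • u)
        (EuclideanSpace.single (Fin.last n) 1) (Fin.last n) = 0 := hfin
    rwa [hL1] at h2
  by_contra hne
  have hG1 : ContinuousAt G 1 := hGd.continuousOn.continuousAt (hT.mem_nhds h1T)
  have hevG : ∀ᶠ t in 𝓝 (1:ℂ), G t ≠ 0 := hG1.eventually_ne hne
  have hevT : ∀ᶠ t in 𝓝 (1:ℂ), t ∈ T := hT.eventually_mem h1T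
  have hMuev : Mu =ᶠ[𝓝 (1:ℂ)] 0 := by
    filter_upwards [hevG, hevT] with t h1 h2
    exact (mul_eq_zero.1 (hGMu t h2)).resolve_left h1
  have hMuAnal : AnalyticOnNhd ℂ Mu T := hMud.analyticOnNhd hT
  have hzero := hMuAnal.eqOn_zero_of_preconnected_of_eventuallyEq_zero
    hconv.isPreconnected h1T hMuev
  exact hMu0 (hzero h0T)
end

section
/- Let U ⊆ ℂᵏ be open, x₀ ∈ U, and let P₁,…,P_n : U → ℂ be holomorphic with P_j(x₀) = 0 for all j. Assume the map Φ = (P₁,…,P_n) : U → ℂⁿ has constant rank on U, i.e., the rank of DΦ(x) is the same for all x ∈ U. Then for every v ∈ ⋂_{j=1}^n ker DP_j(x₀) there exist r > 0, an open neighborhood U' ⊆ U of x₀, and a holomorphic map φ : {t ∈ ℂ : |t| < r} × U' → U such that: φ(0,x) = x for all x ∈ U'; (∂φ/∂t)(0,x₀) = v; and P_j(φ(t,x)) = P_j(x) for all j, all |t| < r and all x ∈ U'. In particular, if x ∈ U' does not lie on any of the hypersurfaces {P_j = 0}, then neither does φ(t,x) for any |t| < r. -/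
set_option maxHeartbeats 1600000

open Metric Set Filter Asymptotics
open scoped Topology

section Regularity
variable {E : Type*} [NormedAddCommGroup E] [NormedSpace ℂ E]
variable {F : Type*} [NormedAddCommGroup F] [NormedSpace ℂ F]

/-- Key quantitative estimate: a `ℂ`-differentiable function on an open set satisfies a
strict-differentiability-type estimate near each point, by the Schwarz lemma. -/
theorem key_reg {s : Set E} (hs : IsOpen s) {f : E → F} (hf : DifferentiableOn ℂ f s)
    {x₀ : E} (hx : x₀ ∈ s) {ε : ℝ} (hε : 0 < ε) :
    ∃ δ > 0, ball x₀ δ ⊆ s ∧ ∀ y ∈ ball x₀ δ, ∀ z ∈ ball x₀ δ,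
      ‖f y - f z - fderiv ℂ f x₀ (y - z)‖ ≤ ε * ‖y - z‖ := by
  obtain ⟨ρ, hρ, hρs⟩ := Metric.isOpen_iff.1 hs x₀ hx
  set T := fderiv ℂ f x₀ with hTdef
  have hT : HasFDerivAt f T x₀ := (hf.differentiableAt (hs.mem_nhds hx)).hasFDerivAt
  set F₁ : E → F := fun x => f x - f x₀ - T (x - x₀) with hF₁def
  have hF₁diff : DifferentiableOn ℂ F₁ (ball x₀ ρ) := by
    apply ((hf.mono hρs).sub_const (f x₀)).sub
    exact (T.differentiable.comp (differentiable_id.sub_const x₀)).differentiableOn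
  set η := ε / 2 with hηdef
  have hη : 0 < η := by positivity
  have hlittle : ∀ᶠ x in 𝓝 x₀, ‖F₁ x‖ ≤ η * ‖x - x₀‖ := isLittleO_iff.1 hT.isLittleO hη
  obtain ⟨δ', hδ', h'⟩ := Metric.eventually_nhds_iff_ball.1 hlittle
  set δ₀ := min δ' ρ with hδ₀def
  have hδ₀ : 0 < δ₀ := lt_min hδ' hρ
  have hδ₀ρ : δ₀ ≤ ρ := min_le_right _ _
  have hbound : ∀ x ∈ ball x₀ δ₀, ‖F₁ x‖ ≤ η * ‖x - x₀‖ :=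
    fun x hx' => h' x (ball_subset_ball (min_le_left _ _) hx')
  set δ := δ₀ / 4 with hδdef
  have hδ : 0 < δ := by positivity
  have hδρ : δ ≤ ρ := le_trans (by linarith) hδ₀ρ
  refine ⟨δ, hδ, fun x hx' => hρs (ball_subset_ball hδρ hx'), ?_⟩
  intro y hy z hz
  rcases eq_or_ne y z with rfl | hyz
  · simp
  set w := y - z with hwdef
  have hw0 : w ≠ 0 := sub_ne_zero.2 hyz
  have hwn : 0 < ‖w‖ := norm_pos_iff.2 hw0
  have hy' : ‖y - x₀‖ < δ := mem_ball_iff_norm.1 hy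
  have hz' : ‖z - x₀‖ < δ := mem_ball_iff_norm.1 hz
  have hwlt : ‖w‖ < 2 * δ := by
    calc ‖w‖ = ‖(y - x₀) - (z - x₀)‖ := by rw [hwdef]; abel_nf
    _ ≤ ‖y - x₀‖ + ‖z - x₀‖ := norm_sub_le _ _
    _ < 2 * δ := by linarith
  set R : ℝ := 3 * δ / ‖w‖ with hRdef
  have hR : 0 < R := by positivity
  set g : ℂ → F := fun ζ => F₁ (z + ζ • w) with hgdef
  have hmemball : ∀ ζ : ℂ, ζ ∈ ball (0:ℂ) R → z + ζ • w ∈ ball x₀ δ₀ := by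
    intro ζ hζ
    have hζn : ‖ζ‖ < R := by simpa using mem_ball_iff_norm.1 hζ
    have h2 : ‖ζ‖ * ‖w‖ < 3 * δ := by
      have := mul_lt_mul_of_pos_right hζn hwn
      rwa [hRdef, div_mul_cancel₀ _ (ne_of_gt hwn)] at this
    have h3 : ‖z + ζ • w - x₀‖ ≤ ‖z - x₀‖ + ‖ζ‖ * ‖w‖ := by
      calc ‖z + ζ • w - x₀‖ = ‖(z - x₀) + ζ • w‖ := by abel_nf
      _ ≤ ‖z - x₀‖ + ‖ζ • w‖ := norm_add_le _ _
      _ = ‖z - x₀‖ + ‖ζ‖ * ‖w‖ := by rw [norm_smul]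
    have h4 : 4 * δ ≤ δ₀ := by rw [hδdef]; linarith
    exact mem_ball_iff_norm.2 (by linarith)
  have hgdiff : DifferentiableOn ℂ g (ball (0:ℂ) R) := by
    intro ζ hζ
    have h5 : DifferentiableWithinAt ℂ (fun ζ : ℂ => z + ζ • w) (ball (0:ℂ) R) ζ :=
      (differentiableWithinAt_id.smul_const w).const_add z
    exact (hF₁diff.differentiableAt (isOpen_ball.mem_nhds
      ((ball_subset_ball hδ₀ρ) (hmemball ζ hζ)))).comp_differentiableWithinAt ζ h5
  have hnormbd : ∀ ζ : ℂ, ζ ∈ ball (0:ℂ) R → ‖g ζ‖ ≤ η * (4 * δ) := by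
    intro ζ hζ
    have hm := hmemball ζ hζ
    have h2 : ‖z + ζ • w - x₀‖ ≤ 4 * δ := by
      have := mem_ball_iff_norm.1 hm
      rw [hδdef]; linarith
    calc ‖g ζ‖ = ‖F₁ (z + ζ • w)‖ := rfl
    _ ≤ η * ‖z + ζ • w - x₀‖ := hbound _ hm
    _ ≤ η * (4 * δ) := by nlinarith [norm_nonneg (z + ζ • w - x₀)]
  have hg0 : g 0 = F₁ z := by simp [hgdef]
  have hg0n : ‖g 0‖ ≤ η * δ := by
    rw [hg0]
    calc ‖F₁ z‖ ≤ η * ‖z - x₀‖ := hbound _ (ball_subset_ball (by linarith) hz)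
    _ ≤ η * δ := by nlinarith [norm_nonneg (z - x₀)]
  have hmaps : MapsTo g (ball (0:ℂ) R) (ball (g 0) (6 * η * δ)) := by
    intro ζ hζ
    rw [mem_ball_iff_norm]
    calc ‖g ζ - g 0‖ ≤ ‖g ζ‖ + ‖g 0‖ := norm_sub_le _ _
    _ ≤ η * (4 * δ) + η * δ := add_le_add (hnormbd ζ hζ) hg0n
    _ < 6 * η * δ := by nlinarith
  have h1mem : (1:ℂ) ∈ ball (0:ℂ) R := by
    rw [mem_ball_iff_norm]
    simp only [sub_zero, norm_one]
    rw [hRdef, lt_div_iff₀ hwn]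
    linarith
  have key := Complex.dist_le_div_mul_dist_of_mapsTo_ball hgdiff (fun ζ hζ => ball_subset_closedBall (hmaps hζ)) h1mem
  have hg1 : g 1 = F₁ y := by simp [hgdef, hwdef]
  rw [hg1, hg0] at key
  have hdist : dist (1:ℂ) 0 = 1 := by simp
  rw [hdist, mul_one] at key
  have hcalc : 6 * η * δ / R = 2 * η * ‖w‖ := by
    rw [hRdef]
    field_simp
    ring
  rw [hcalc] at key
  have hFyz : F₁ y - F₁ z = f y - f z - T (y - z) := by
    simp only [hF₁def, map_sub]
    abel
  rw [dist_eq_norm, hFyz] at key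
  calc ‖f y - f z - T (y - z)‖ ≤ 2 * η * ‖w‖ := key
  _ = ε * ‖y - z‖ := by rw [hηdef, hwdef]; ring

/-- A `ℂ`-differentiable function on an open set is strictly differentiable at interior points. -/
theorem strict_of_diffOn {s : Set E} (hs : IsOpen s) {f : E → F} (hf : DifferentiableOn ℂ f s)
    {x₀ : E} (hx : x₀ ∈ s) : HasStrictFDerivAt f (fderiv ℂ f x₀) x₀ := by
  apply HasStrictFDerivAt.of_isLittleO
  rw [isLittleO_iff]
  intro c hc
  obtain ⟨δ, hδ, -, hb⟩ := key_reg hs hf hx hc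
  have hmem : ball x₀ δ ×ˢ ball x₀ δ ∈ 𝓝 (x₀, x₀) := by
    rw [nhds_prod_eq]
    exact Filter.prod_mem_prod (ball_mem_nhds _ hδ) (ball_mem_nhds _ hδ)
  filter_upwards [hmem] with p hp
  exact hb p.1 hp.1 p.2 hp.2

/-- The `ℂ`-Fréchet derivative of a `ℂ`-differentiable function on an open set is continuous
at each interior point. -/
theorem fderiv_continuousAt_of_diffOn {s : Set E} (hs : IsOpen s) {f : E → F}
    (hf : DifferentiableOn ℂ f s) {x₀ : E} (hx : x₀ ∈ s) :
    ContinuousAt (fderiv ℂ f) x₀ := by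
  rw [Metric.continuousAt_iff]
  intro ε hε
  obtain ⟨δ, hδ, hδs, hb⟩ := key_reg hs hf hx (half_pos hε)
  refine ⟨δ, hδ, fun {x} hx' => ?_⟩
  have hxU : x ∈ s := hδs (mem_ball.2 hx')
  have hdx : HasFDerivAt f (fderiv ℂ f x) x := (hf.differentiableAt (hs.mem_nhds hxU)).hasFDerivAt
  set T := fderiv ℂ f x₀
  have hT : HasFDerivAt (fun y => f y - T y) (fderiv ℂ f x - T) x :=
    hdx.sub (T.hasFDerivAt)
  have hlip : ∀ᶠ y in 𝓝 x, ‖(f y - T y) - (f x - T x)‖ ≤ (ε/2) * ‖y - x‖ := by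
    have hball : ball x₀ δ ∈ 𝓝 x := isOpen_ball.mem_nhds (mem_ball.2 hx')
    filter_upwards [hball] with y hy
    have := hb y hy x (mem_ball.2 hx')
    calc ‖(f y - T y) - (f x - T x)‖ = ‖f y - f x - T (y - x)‖ := by rw [map_sub]; abel_nf
    _ ≤ (ε/2) * ‖y - x‖ := this
  have := hT.le_of_lip' (le_of_lt (half_pos hε)) hlip
  rw [dist_eq_norm]
  calc ‖fderiv ℂ f x - T‖ ≤ ε/2 := this
  _ < ε := half_lt_self hε

end Regularity

/-- The map `Φ = (P₁,…,P_n)` collecting a family of scalar functions. -/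
def PhiMap (k n : ℕ) (P : Fin n → (Fin k → ℂ) → ℂ) : (Fin k → ℂ) → (Fin n → ℂ) :=
  fun z j => P j z

/-- If `Φ = (P₁,…,P_n)` is holomorphic of constant rank on an open set `U ∋ x₀`, with all
`P_j(x₀) = 0`, then every `v ∈ ⋂_j ker DP_j(x₀)` is the initial velocity of a holomorphic flow
`φ(t,x)` defined for `|t| < r`, `x ∈ U'`, fixing each function `P_j` (hence preserving each
hypersurface `{P_j = 0}` and its complement). -/
theorem flow_tangent_to_intersection (k n : ℕ) (U : Set (Fin k → ℂ)) (hU : IsOpen U)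
    (x₀ : Fin k → ℂ) (hx₀ : x₀ ∈ U)
    (P : Fin n → (Fin k → ℂ) → ℂ)
    (hP : ∀ j, DifferentiableOn ℂ (P j) U)
    (hP0 : ∀ j, P j x₀ = 0)
    (hrank : ∀ x ∈ U, ∀ y ∈ U,
      LinearMap.rank (fderiv ℂ (PhiMap k n P) x).toLinearMap =
        LinearMap.rank (fderiv ℂ (PhiMap k n P) y).toLinearMap) :
    ∀ v : Fin k → ℂ, (∀ j, fderiv ℂ (P j) x₀ v = 0) →
      ∃ r : ℝ, 0 < r ∧ ∃ U' : Set (Fin k → ℂ), IsOpen U' ∧ x₀ ∈ U' ∧ U' ⊆ U ∧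
        ∃ φ : ℂ → (Fin k → ℂ) → (Fin k → ℂ),
          DifferentiableOn ℂ (fun p : ℂ × (Fin k → ℂ) => φ p.1 p.2)
            (Metric.ball (0 : ℂ) r ×ˢ U') ∧
          (∀ t ∈ Metric.ball (0 : ℂ) r, ∀ x ∈ U', φ t x ∈ U) ∧
          (∀ x ∈ U', φ 0 x = x) ∧
          deriv (fun t => φ t x₀) 0 = v ∧
          (∀ j, ∀ t ∈ Metric.ball (0 : ℂ) r, ∀ x ∈ U', P j (φ t x) = P j x) ∧
          (∀ t ∈ Metric.ball (0 : ℂ) r, ∀ x ∈ U',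
            (∀ j, P j x ≠ 0) → ∀ j, P j (φ t x) ≠ 0) := by
  intro v hv
  classical
  set Φ := PhiMap k n P with hΦdef
  have hΦ : DifferentiableOn ℂ Φ U := fun x hx => differentiableWithinAt_pi.2 fun j => hP j x hx
  have hΦx : ∀ x ∈ U, DifferentiableAt ℂ Φ x := fun x hx => hΦ.differentiableAt (hU.mem_nhds hx)
  set T := fderiv ℂ Φ x₀ with hTdef
  set Tl := T.toLinearMap with hTldef
  have hTv : Tl v = 0 := by
    have hpi : T = ContinuousLinearMap.pi fun j => fderiv ℂ (P j) x₀ := by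
      rw [hTdef, hΦdef]
      exact fderiv_pi fun j => (hP j).differentiableAt (hU.mem_nhds hx₀)
    show T v = 0
    rw [hpi]; funext j; simpa using hv j
  set K := LinearMap.ker Tl with hKdef
  have hvK : v ∈ K := by simp [hKdef, LinearMap.mem_ker, hTv]
  obtain ⟨C, hC⟩ := Submodule.exists_isCompl K
  set prK := K.projectionOnto C hC with hprKdef
  set prC := C.projectionOnto K hC.symm with hprCdef
  have hsum : ∀ u : Fin k → ℂ, ((prK u : Fin k → ℂ)) + ((prC u : Fin k → ℂ)) = u :=
    fun u => Submodule.projection_add_projection_eq_self hC u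
  have hsubK : ∀ u : Fin k → ℂ, u - (prC u : Fin k → ℂ) ∈ K := by
    intro u
    have h1 : (prK u : Fin k → ℂ) = u - (prC u : Fin k → ℂ) := by
      rw [eq_sub_iff_add_eq]; exact hsum u
    rw [← h1]; exact (prK u).2
  set TC := Tl.comp C.subtype with hTCdef
  have hTlprC : ∀ u, Tl ((prC u : Fin k → ℂ)) = Tl u := by
    intro u
    have h2 : Tl (u - (prC u : Fin k → ℂ)) = 0 := LinearMap.mem_ker.1 (hsubK u)
    rw [map_sub, sub_eq_zero] at h2
    exact h2.symm
  have hTCker : LinearMap.ker TC = ⊥ := by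
    rw [LinearMap.ker_eq_bot']
    intro c hc
    have hcK : (c : Fin k → ℂ) ∈ K := LinearMap.mem_ker.2 hc
    exact Subtype.ext (Submodule.disjoint_def.1 hC.disjoint _ hcK c.2)
  obtain ⟨g, hg⟩ := TC.exists_leftInverse_of_injective hTCker
  set σl := C.subtype.comp g with hσldef
  have hσT : ∀ u, σl (Tl u) = ((prC u : Fin k → ℂ)) := by
    intro u
    rw [← hTlprC u]
    have h1 : g (TC (prC u)) = prC u := by
      have := LinearMap.ext_iff.1 hg (prC u)
      simpa using this
    show C.subtype (g (TC (prC u))) = _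
    rw [h1]
    rfl
  set pKl := K.subtype.comp prK with hpKldef
  have hpKmem : ∀ u, pKl u ∈ K := fun u => (prK u).2
  have hpKv : pKl v = v := by
    show (K.subtype (prK v) : Fin k → ℂ) = v
    have := Submodule.projectionOnto_apply_left hC ⟨v, hvK⟩
    rw [hprKdef]
    exact congrArg _ this
  set σ' := LinearMap.toContinuousLinearMap σl with hσ'def
  set pK' := LinearMap.toContinuousLinearMap pKl with hpK'def
  set hmap := fun x => σ' (Φ x) + pK' x with hmapdef
  have hhdiff : DifferentiableOn ℂ hmap U :=
    (σ'.differentiable.comp_differentiableOn hΦ).add pK'.differentiable.differentiableOn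
  have hDh : ∀ x ∈ U, HasFDerivAt hmap (σ'.comp (fderiv ℂ Φ x) + pK') x := fun x hx =>
    ((σ'.hasFDerivAt.comp x (hΦx x hx).hasFDerivAt).add pK'.hasFDerivAt)
  have hid : σ'.comp T + pK' = ContinuousLinearMap.id ℂ (Fin k → ℂ) := by
    refine ContinuousLinearMap.ext fun u => ?_
    show σ' (T u) + pK' u = u
    have h1 : σ' (T u) = σl (Tl u) := by
      rw [hσ'def, LinearMap.coe_toContinuousLinearMap']; rfl
    have h2 : pK' u = pKl u := by
      rw [hpK'def, LinearMap.coe_toContinuousLinearMap']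
    rw [h1, h2, hσT u]
    show _ + (K.subtype (prK u) : Fin k → ℂ) = u
    rw [add_comm]
    exact hsum u
  have hfd0 : fderiv ℂ hmap x₀ = ContinuousLinearMap.id ℂ (Fin k → ℂ) := by
    rw [(hDh x₀ hx₀).fderiv, hid]
  have hstrict : HasStrictFDerivAt hmap
      ((ContinuousLinearEquiv.refl ℂ (Fin k → ℂ)) : (Fin k → ℂ) →L[ℂ] (Fin k → ℂ)) x₀ := by
    have := strict_of_diffOn hU hhdiff hx₀
    rwa [hfd0, ← ContinuousLinearEquiv.coe_refl] at this
  set PH := hstrict.toOpenPartialHomeomorph hmap with hPHdef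
  have hPHcoe : (PH : (Fin k → ℂ) → (Fin k → ℂ)) = hmap := hstrict.toOpenPartialHomeomorph_coe
  set ψ := PH.symm with hψdef
  have hx₀src : x₀ ∈ PH.source := hstrict.mem_toOpenPartialHomeomorph_source
  set y₀ := hmap x₀ with hy₀def
  have hy₀tgt : y₀ ∈ PH.target := hstrict.image_mem_toOpenPartialHomeomorph_target
  have hcontfd : ContinuousAt (fderiv ℂ hmap) x₀ := fderiv_continuousAt_of_diffOn hU hhdiff hx₀
  have hunit : ∀ᶠ x in 𝓝 x₀, IsUnit (fderiv ℂ hmap x) := by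
    have hopen : IsOpen {A : (Fin k → ℂ) →L[ℂ] (Fin k → ℂ) | IsUnit A} := Units.isOpen
    have hmem : {A : (Fin k → ℂ) →L[ℂ] (Fin k → ℂ) | IsUnit A} ∈ 𝓝 (fderiv ℂ hmap x₀) := by
      apply hopen.mem_nhds
      rw [hfd0]
      show IsUnit (ContinuousLinearMap.id ℂ (Fin k → ℂ))
      rw [← ContinuousLinearMap.one_def]
      exact isUnit_one
    exact hcontfd.eventually_mem hmem
  obtain ⟨δ₁, hδ₁, hball₁⟩ : ∃ δ₁ > 0, ∀ x ∈ ball x₀ δ₁,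
      x ∈ U ∧ x ∈ PH.source ∧ IsUnit (fderiv ℂ hmap x) := by
    have hall : ∀ᶠ x in 𝓝 x₀, x ∈ U ∧ x ∈ PH.source ∧ IsUnit (fderiv ℂ hmap x) := by
      filter_upwards [hU.mem_nhds hx₀, PH.open_source.mem_nhds hx₀src, hunit] with x a b c
      exact ⟨a, b, c⟩
    obtain ⟨δ₁, hδ₁, hb⟩ := Metric.eventually_nhds_iff_ball.1 hall
    exact ⟨δ₁, hδ₁, hb⟩
  set W := PH.target ∩ ψ ⁻¹' (ball x₀ δ₁) with hWdef
  have hWopen : IsOpen W := PH.isOpen_inter_preimage_symm isOpen_ball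
  have hψx₀ : ψ y₀ = x₀ := by
    have := PH.left_inv hx₀src
    rwa [hPHcoe] at this
  have hy₀W : y₀ ∈ W := ⟨hy₀tgt, by rw [Set.mem_preimage, hψx₀]; exact mem_ball_self hδ₁⟩
  have hkey : ∀ y ∈ W, ψ y ∈ U ∧ ∃ e : (Fin k → ℂ) ≃L[ℂ] (Fin k → ℂ),
      HasFDerivAt ψ (e.symm : (Fin k → ℂ) →L[ℂ] (Fin k → ℂ)) y ∧
      (e : (Fin k → ℂ) →L[ℂ] (Fin k → ℂ)) = σ'.comp (fderiv ℂ Φ (ψ y)) + pK' := by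
    rintro y ⟨hyt, hyb⟩
    have hxb : ψ y ∈ ball x₀ δ₁ := hyb
    obtain ⟨hxU, hxsrc, hu⟩ := hball₁ _ hxb
    set e := ContinuousLinearEquiv.ofUnit hu.unit with hedef
    have hecoe : (e : (Fin k → ℂ) →L[ℂ] (Fin k → ℂ)) = fderiv ℂ hmap (ψ y) := by
      rw [hedef]
      refine ContinuousLinearMap.ext fun u => ?_
      show (hu.unit : (Fin k → ℂ) →L[ℂ] (Fin k → ℂ)) u = _
      rw [hu.unit_spec]
    have hDx : HasFDerivAt hmap (e : (Fin k → ℂ) →L[ℂ] (Fin k → ℂ)) (ψ y) := by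
      rw [hecoe]
      exact (hhdiff.differentiableAt (hU.mem_nhds hxU)).hasFDerivAt
    have hψd : HasFDerivAt ψ (e.symm : (Fin k → ℂ) →L[ℂ] (Fin k → ℂ)) y := by
      apply PH.hasFDerivAt_symm hyt
      rw [hPHcoe]
      exact hDx
    have hfd : (e : (Fin k → ℂ) →L[ℂ] (Fin k → ℂ)) = σ'.comp (fderiv ℂ Φ (ψ y)) + pK' := by
      rw [hecoe, (hDh _ hxU).fderiv]
    exact ⟨hxU, e, hψd, hfd⟩
  -- constant rank: kernel directions are killed
  have hkerC : ∀ x ∈ U, ∀ e : (Fin k → ℂ) ≃L[ℂ] (Fin k → ℂ),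
      ((e : (Fin k → ℂ) →L[ℂ] (Fin k → ℂ)) = σ'.comp (fderiv ℂ Φ x) + pK') →
      ∀ κ, κ ∈ K → fderiv ℂ Φ x ((e.symm : (Fin k → ℂ) →L[ℂ] (Fin k → ℂ)) κ) = 0 := by
    intro x hxU e he κ hκ
    set A := fderiv ℂ Φ x with hAdef
    set esl := ((e.symm : (Fin k → ℂ) →L[ℂ] (Fin k → ℂ))).toLinearMap with hesldef
    set Gl := A.toLinearMap.comp esl with hGldef
    have hstar : ∀ u, σl (Gl u) + pKl (esl u) = u := by
      intro u
      have h2 : (e : (Fin k → ℂ) →L[ℂ] (Fin k → ℂ))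
          ((e.symm : (Fin k → ℂ) →L[ℂ] (Fin k → ℂ)) u) = u := e.apply_symm_apply u
      rw [he] at h2
      have h3 : σ' (A ((e.symm : (Fin k → ℂ) →L[ℂ] (Fin k → ℂ)) u)) +
          pK' ((e.symm : (Fin k → ℂ) →L[ℂ] (Fin k → ℂ)) u) = u := h2
      have h4 : σ' (A ((e.symm : (Fin k → ℂ) →L[ℂ] (Fin k → ℂ)) u)) = σl (Gl u) := by
        rw [hσ'def, LinearMap.coe_toContinuousLinearMap']
        rfl
      have h5 : pK' ((e.symm : (Fin k → ℂ) →L[ℂ] (Fin k → ℂ)) u) = pKl (esl u) := by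
        rw [hpK'def, LinearMap.coe_toContinuousLinearMap']
        rfl
      rw [h4, h5] at h3
      exact h3
    have hrk := hrank x hxU x₀ hx₀
    have hfin : Module.finrank ℂ (LinearMap.range A.toLinearMap)
        = Module.finrank ℂ (LinearMap.range Tl) := by
      have := congrArg Cardinal.toNat hrk
      exact this
    have hTCinj : Function.Injective TC := LinearMap.ker_eq_bot.1 hTCker
    have hrangeTC : LinearMap.range TC = LinearMap.range Tl := by
      apply le_antisymm
      · rw [hTCdef, LinearMap.range_comp]
        exact LinearMap.map_le_range
      · rintro w hw
        obtain ⟨u, rfl⟩ := LinearMap.mem_range.1 hw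
        refine LinearMap.mem_range.2 ⟨prC u, ?_⟩
        show Tl (C.subtype (prC u)) = Tl u
        exact hTlprC u
    have hCfin : Module.finrank ℂ C = Module.finrank ℂ (LinearMap.range Tl) := by
      rw [← hrangeTC, LinearMap.finrank_range_of_inj hTCinj]
    have hGlCinj : Function.Injective (Gl.comp C.subtype) := by
      rw [← LinearMap.ker_eq_bot, LinearMap.ker_eq_bot']
      intro c hc
      have hc0 : Gl (c : Fin k → ℂ) = 0 := hc
      have hst := hstar (c : Fin k → ℂ)
      rw [hc0, map_zero, zero_add] at hst
      have hcK : (c : Fin k → ℂ) ∈ K := by rw [← hst]; exact hpKmem _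
      exact Subtype.ext (Submodule.disjoint_def.1 hC.disjoint _ hcK c.2)
    have hrangeGl : LinearMap.range Gl = LinearMap.range A.toLinearMap := by
      rw [hGldef, LinearMap.range_comp]
      have hsurj : LinearMap.range esl = ⊤ := by
        rw [LinearMap.range_eq_top]
        intro u
        exact ⟨e u, by simp [hesldef]⟩
      rw [hsurj, Submodule.map_top]
    have hmapGl : Submodule.map Gl C = LinearMap.range Gl := by
      apply Submodule.eq_of_le_of_finrank_le LinearMap.map_le_range
      have h1 : Module.finrank ℂ (Submodule.map Gl C) = Module.finrank ℂ C := by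
        have h2 : LinearMap.range (Gl.comp C.subtype) = Submodule.map Gl C := by
          rw [LinearMap.range_comp, Submodule.range_subtype]
        rw [← h2, LinearMap.finrank_range_of_inj hGlCinj]
      rw [h1, hrangeGl, hfin, ← hCfin]
    have hGκ : Gl κ ∈ LinearMap.range Gl := LinearMap.mem_range_self _ κ
    rw [← hmapGl] at hGκ
    obtain ⟨c, hcC, hcκ⟩ := Submodule.mem_map.1 hGκ
    have h1 := hstar c
    have h2 := hstar κ
    rw [hcκ] at h1
    have hsub : c - κ = pKl (esl c) - pKl (esl κ) := by
      have h3 : (σl (Gl κ) + pKl (esl c)) - (σl (Gl κ) + pKl (esl κ)) = c - κ := by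
        rw [h1, h2]
      rw [← h3]; abel
    have hcκK : c - κ ∈ K := by rw [hsub]; exact K.sub_mem (hpKmem _) (hpKmem _)
    have hcK : c ∈ K := by
      have := K.add_mem hcκK hκ
      simpa using this
    have hc0 : c = 0 := Submodule.disjoint_def.1 hC.disjoint _ hcK hcC
    have hGκ0 : Gl κ = 0 := by rw [← hcκ, hc0, map_zero]
    exact hGκ0
  -- choose the neighborhoods
  obtain ⟨ε₁, hε₁, hballW⟩ := Metric.isOpen_iff.1 hWopen y₀ hy₀W
  have hhcont : ContinuousAt hmap x₀ :=
    (hhdiff.differentiableAt (hU.mem_nhds hx₀)).continuousAt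
  obtain ⟨δ₂, hδ₂, hδ₂b⟩ : ∃ δ₂ > 0, δ₂ ≤ δ₁ ∧
      ∀ x ∈ ball x₀ δ₂, hmap x ∈ ball y₀ (ε₁ / 2) := by
    obtain ⟨δ', hδ', hb⟩ := Metric.continuousAt_iff.1 hhcont (ε₁ / 2) (by positivity)
    refine ⟨min δ' δ₁, lt_min hδ' hδ₁, min_le_right _ _, fun x hx => ?_⟩
    have : dist x x₀ < δ' := lt_of_lt_of_le (mem_ball.1 hx) (min_le_left _ _)
    exact mem_ball.2 (hb this)
  obtain ⟨hδ₂₁, hδ₂b⟩ := hδ₂b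
  set U' := ball x₀ δ₂ with hU'def
  set r : ℝ := (ε₁ / 2) / (‖v‖ + 1) with hrdef
  have hr : 0 < r := by positivity
  have hU'U : U' ⊆ U := fun x hx => (hball₁ x (ball_subset_ball hδ₂₁ hx)).1
  have hU'src : U' ⊆ PH.source := fun x hx => (hball₁ x (ball_subset_ball hδ₂₁ hx)).2.1
  set φ : ℂ → (Fin k → ℂ) → (Fin k → ℂ) := fun t x => ψ (hmap x + t • v) with hφdef
  -- the moved point stays in the nice ball
  have hinW : ∀ t ∈ ball (0:ℂ) r, ∀ x ∈ U', hmap x + t • v ∈ W := by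
    intro t ht x hx
    apply hballW
    have h1 : ‖hmap x - y₀‖ < ε₁ / 2 := mem_ball_iff_norm.1 (hδ₂b x hx)
    have h2 : ‖t‖ < r := by simpa using mem_ball_iff_norm.1 ht
    have h3 : ‖t • v‖ < ε₁ / 2 := by
      rw [norm_smul]
      calc ‖t‖ * ‖v‖ ≤ ‖t‖ * (‖v‖ + 1) := by nlinarith [norm_nonneg t, norm_nonneg v]
      _ < r * (‖v‖ + 1) := by
          apply mul_lt_mul_of_pos_right h2
          positivity
      _ = ε₁ / 2 := by rw [hrdef]; field_simp
    rw [mem_ball_iff_norm]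
    calc ‖hmap x + t • v - y₀‖ = ‖(hmap x - y₀) + t • v‖ := by abel_nf
    _ ≤ ‖hmap x - y₀‖ + ‖t • v‖ := norm_add_le _ _
    _ < ε₁ := by linarith
  have hφU : ∀ t ∈ ball (0:ℂ) r, ∀ x ∈ U', φ t x ∈ U := by
    intro t ht x hx
    exact (hkey _ (hinW t ht x hx)).1
  -- φ 0 x = x
  have hφ0 : ∀ x ∈ U', φ 0 x = x := by
    intro x hx
    have h1 : hmap x + (0:ℂ) • v = hmap x := by rw [zero_smul, add_zero]
    rw [hφdef]
    show ψ (hmap x + (0:ℂ) • v) = x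
    rw [h1, ← hPHcoe]
    exact PH.left_inv (hU'src hx)
  -- invariance of Φ
  have hΦinv : ∀ t ∈ ball (0:ℂ) r, ∀ x ∈ U', Φ (φ t x) = Φ x := by
    intro t ht x hx
    set η : ℂ → (Fin n → ℂ) := fun s => Φ (ψ (hmap x + s • v)) with hηdef
    have hηd : ∀ s ∈ ball (0:ℂ) r, HasDerivAt η 0 s := by
      intro s hs
      have hw := hinW s hs x hx
      obtain ⟨hxU2, e, hψd, hfd⟩ := hkey _ hw
      have hinner : HasDerivAt (fun s' : ℂ => hmap x + s' • v) v s := by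
        have := ((hasDerivAt_id s).smul_const v).const_add (hmap x)
        simpa using this
      have hΦd : HasFDerivAt Φ (fderiv ℂ Φ (ψ (hmap x + s • v))) (ψ (hmap x + s • v)) :=
        (hΦx _ hxU2).hasFDerivAt
      have hcomp1 : HasDerivAt (fun s' : ℂ => ψ (hmap x + s' • v))
          ((e.symm : (Fin k → ℂ) →L[ℂ] (Fin k → ℂ)) v) s :=
        hψd.comp_hasDerivAt s hinner
      have hcomp2 : HasDerivAt η
          ((fderiv ℂ Φ (ψ (hmap x + s • v))) ((e.symm : (Fin k → ℂ) →L[ℂ] (Fin k → ℂ)) v)) s :=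
        by have := hΦd.comp_hasDerivAt s hcomp1; exact this
      have hz := hkerC _ hxU2 e hfd v hvK
      rwa [hz] at hcomp2
    -- constancy on the convex ball
    have hconst : η t = η 0 := by
      have hball : Convex ℝ (ball (0:ℂ) r) := convex_ball 0 r
      have hle := hball.norm_image_sub_le_of_norm_hasFDerivWithin_le
        (f := η) (f' := fun _ => (0 : ℂ →L[ℝ] (Fin n → ℂ))) (C := 0)
        (fun s hs => by
          have hsm : ContinuousLinearMap.smulRight (1 : ℂ →L[ℂ] ℂ) (0 : Fin n → ℂ) = 0 :=
            ContinuousLinearMap.ext fun w => by simp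
          have h0 : HasFDerivAt η (0 : ℂ →L[ℂ] (Fin n → ℂ)) s := hsm ▸ (hηd s hs).hasFDerivAt
          have hr0 : (0 : ℂ →L[ℂ] (Fin n → ℂ)).restrictScalars ℝ = 0 :=
            ContinuousLinearMap.ext fun w => by simp
          exact hr0 ▸ (h0.restrictScalars ℝ).hasFDerivWithinAt)
        (fun s _ => by simp) (mem_ball_self hr) ht
      have : ‖η t - η 0‖ ≤ 0 := by simpa using hle
      have := le_antisymm this (norm_nonneg _)
      rwa [norm_eq_zero, sub_eq_zero] at this
    calc Φ (φ t x) = η t := rfl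
    _ = η 0 := hconst
    _ = Φ x := by
        show Φ (ψ (hmap x + (0:ℂ) • v)) = Φ x
        rw [zero_smul, add_zero]
        have h6 : ψ (hmap x) = x := by
          rw [← hPHcoe]
          exact PH.left_inv (hU'src hx)
        rw [h6]
  -- the derivative at 0
  have hderiv : deriv (fun t => φ t x₀) 0 = v := by
    obtain ⟨hxU2, e, hψd, hfd⟩ := hkey y₀ hy₀W
    have hev : e v = v := by
      have h1 : (e : (Fin k → ℂ) →L[ℂ] (Fin k → ℂ)) v = v := by
        rw [hfd]
        show σ' (fderiv ℂ Φ (ψ y₀) v) + pK' v = v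
        rw [hψx₀]
        have h2 : σ' (fderiv ℂ Φ x₀ v) = σl (Tl v) := by
          rw [hσ'def, LinearMap.coe_toContinuousLinearMap']; rfl
        have h3 : pK' v = pKl v := by
          rw [hpK'def, LinearMap.coe_toContinuousLinearMap']
        show σ' (T v) + pK' v = v
        rw [show σ' (T v) = σl (Tl v) from h2, h3, hTv, map_zero, zero_add, hpKv]
      exact h1
    have hesymm : (e.symm : (Fin k → ℂ) →L[ℂ] (Fin k → ℂ)) v = v := by
      have h4 := congrArg e.symm hev
      rw [e.symm_apply_apply] at h4
      simpa using h4.symm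
    have hinner : HasDerivAt (fun t : ℂ => hmap x₀ + t • v) v 0 := by
      have := ((hasDerivAt_id (0:ℂ)).smul_const v).const_add (hmap x₀)
      simpa using this
    have hcomp : HasDerivAt (fun t : ℂ => ψ (hmap x₀ + t • v))
        ((e.symm : (Fin k → ℂ) →L[ℂ] (Fin k → ℂ)) v) 0 := by
      apply HasFDerivAt.comp_hasDerivAt
      · show HasFDerivAt ψ _ (hmap x₀ + (0:ℂ) • v)
        rw [zero_smul, add_zero]
        exact hψd
      · exact hinner
    rw [hesymm] at hcomp
    exact hcomp.deriv
  -- joint differentiability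
  have hjoint : DifferentiableOn ℂ (fun p : ℂ × (Fin k → ℂ) => φ p.1 p.2)
      (ball (0:ℂ) r ×ˢ U') := by
    rintro ⟨t, x⟩ hp
    obtain ⟨ht, hx⟩ := hp
    have hw := hinW t ht x hx
    obtain ⟨hxU2, e, hψd, hfd⟩ := hkey _ hw
    have hinner : DifferentiableAt ℂ (fun p : ℂ × (Fin k → ℂ) => hmap p.2 + p.1 • v) (t, x) := by
      have h1 : DifferentiableAt ℂ (fun p : ℂ × (Fin k → ℂ) => hmap p.2) (t, x) :=
        (hhdiff.differentiableAt (hU.mem_nhds (hU'U hx))).comp (t, x) differentiableAt_snd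
      have h2 : DifferentiableAt ℂ (fun p : ℂ × (Fin k → ℂ) => p.1 • v) (t, x) :=
        differentiableAt_fst.smul_const v
      exact h1.add h2
    exact (hψd.differentiableAt.comp (t, x) hinner).differentiableWithinAt
  -- invariance of each P j
  have hPinv : ∀ j, ∀ t ∈ ball (0:ℂ) r, ∀ x ∈ U', P j (φ t x) = P j x := by
    intro j t ht x hx
    exact congrFun (hΦinv t ht x hx) j
  refine ⟨r, hr, U', isOpen_ball, mem_ball_self hδ₂, hU'U, φ, hjoint, hφU, hφ0, hderiv, hPinv, ?_⟩
  intro t ht x hx hne j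
  rw [hPinv j t ht x hx]
  exact hne j
end
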